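/- arXiv:2405.03625 — 7 statements merged into one kernel-verified Lean document; each statement's English description precedes it below -/
import Mathlib

section
/- For any fixed base b > 1 and any digit block w of length p ≥ 1, and any k ≥ 0, the number N_w(k,l) of strings of length l over the alphabet {0,...,b-1} containing exactly k (possibly overlapping) occurrences of w satisfies N_w(k,l) ≤ b^l (trivially), and moreover the sum over 0 ≤ j ≤ k of Σ_l N_w(j,l) b^{-l} is at most p(k+1)b^p. -/
open scoped BigOperators

/-- Number of (possibly overlapping) occurrences of the block `w` as a contiguous
substring of `X`. -/
def occCount {α : Type*} [DecidableEq α] (w X : List α) : ℕ :=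
  ((List.range X.length).filter fun i => (X.drop i).take w.length = w).length

/-- `Nw b w k l`: the number of strings of length `l` over `{0,…,b-1}` containing
exactly `k` occurrences of `w`. -/
def Nw (b : ℕ) (w : List (Fin b)) (k l : ℕ) : ℕ :=
  Fintype.card {f : Fin l → Fin b // occCount w (List.ofFn f) = k}


lemma summable_choose_mul (i : ℕ) {x : ℝ} (hx0 : 0 ≤ x) (hx1 : x < 1) :
    Summable fun m : ℕ => (m.choose i : ℝ) * x ^ m := by
  refine Summable.of_nonneg_of_le (fun m => by positivity) (fun m => ?_)
    (summable_pow_mul_geometric_of_norm_lt_one i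
      (by rwa [Real.norm_eq_abs, abs_of_nonneg hx0]))
  have h : (m.choose i : ℝ) ≤ (m : ℝ) ^ i := by
    exact_mod_cast Nat.choose_le_pow m i
  have : (0:ℝ) ≤ x ^ m := by positivity
  nlinarith

lemma tsum_choose_mul {x : ℝ} (hx0 : 0 ≤ x) (hx1 : x < 1) (i : ℕ) :
    ∑' m : ℕ, (m.choose i : ℝ) * x ^ m = x ^ i * ((1 - x)⁻¹) ^ (i + 1) := by
  induction i with
  | zero => simp [tsum_geometric_of_lt_one hx0 hx1]
  | succ i ih =>
    have hs1 := summable_choose_mul (i+1) hx0 hx1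
    have hs0 := summable_choose_mul i hx0 hx1
    have h1x : (0:ℝ) < 1 - x := by linarith
    have key : (∑' m : ℕ, (m.choose (i+1) : ℝ) * x ^ m)
        = x * (∑' m : ℕ, (m.choose (i+1) : ℝ) * x ^ m)
          + x * (x ^ i * ((1 - x)⁻¹) ^ (i + 1)) := by
      conv_lhs => rw [Summable.tsum_eq_zero_add hs1]
      have he : (fun m : ℕ => ((m+1).choose (i+1) : ℝ) * x ^ (m+1))
          = fun m : ℕ => x * ((m.choose (i+1) : ℝ) * x ^ m) + x * ((m.choose i : ℝ) * x ^ m) := by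
        funext m
        rw [Nat.choose_succ_succ]
        push_cast
        ring
      rw [he, Summable.tsum_add (hs1.mul_left x) (hs0.mul_left x), tsum_mul_left, tsum_mul_left, ih]
      simp
    have hxne : (1 : ℝ) - x ≠ 0 := ne_of_gt h1x
    have ht2 : (∑' m : ℕ, (m.choose (i+1) : ℝ) * x ^ m)
        = x * (x ^ i * ((1 - x)⁻¹) ^ (i + 1)) / (1 - x) := by
      field_simp
      field_simp at key
      linarith
    rw [ht2]
    rw [div_eq_mul_inv]
    ring


lemma occCount_eq_card {α : Type*} [DecidableEq α] (w X : List α) :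
    occCount w X
      = ((Finset.range X.length).filter fun i => (X.drop i).take w.length = w).card := rfl

lemma take_drop_eq_iff {b l a : ℕ} (w : List (Fin b)) (f : Fin l → Fin b)
    (h : a + w.length ≤ l) :
    ((List.ofFn f).drop a).take w.length = w
      ↔ ∀ j : Fin w.length, f ⟨a + j, by have := j.isLt; omega⟩ = w.get j := by
  constructor
  · intro he j
    have hj : (j : ℕ) < w.length := j.isLt
    have h1 : (((List.ofFn f).drop a).take w.length)[(j:ℕ)]'(by
        simp [List.length_take, List.length_drop]; omega) = w[(j:ℕ)] := by
      simp_rw [he]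
    simpa [List.getElem_take, List.getElem_drop] using h1
  · intro hj
    apply List.ext_getElem
    · simp [List.length_take, List.length_drop]; omega
    · intro i h1 h2
      have := hj ⟨i, h2⟩
      simpa [List.getElem_take, List.getElem_drop] using this

variable {b : ℕ} {w : List (Fin b)} {l : ℕ}

/-- The set of aligned block positions where `w` occurs. -/
def Bset (w : List (Fin b)) (f : Fin l → Fin b) : Finset (Fin (l / w.length)) :=
  Finset.univ.filter fun i => ((List.ofFn f).drop (i * w.length)).take w.length = w

lemma blk_le (p : ℕ) (i : Fin (l / p)) : (i : ℕ) * p + p ≤ l := by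
  have h1 : ((i : ℕ) + 1) * p ≤ (l / p) * p := Nat.mul_le_mul_right _ i.isLt
  have h2 := Nat.div_mul_le_self l p
  calc (i : ℕ) * p + p = ((i : ℕ) + 1) * p := by ring
    _ ≤ _ := le_trans h1 h2

lemma card_Bset_le {k : ℕ} (hw : 1 ≤ w.length) (f : Fin l → Fin b)
    (h : occCount w (List.ofFn f) ≤ k) : (Bset w f).card ≤ k := by
  refine le_trans ?_ (le_trans (le_of_eq (occCount_eq_card w (List.ofFn f)).symm) h)
  rw [List.length_ofFn]
  apply Finset.card_le_card_of_injOn (fun i : Fin (l / w.length) => (i : ℕ) * w.length)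
  · intro i hi
    rw [Finset.mem_coe, Bset, Finset.mem_filter] at hi
    rw [Finset.mem_coe, Finset.mem_filter]
    refine ⟨Finset.mem_range.2 ?_, hi.2⟩
    have := blk_le w.length i
    show (i : ℕ) * w.length < l
    omega
  · intro i _ j _ hij
    have : (i : ℕ) = (j : ℕ) := Nat.eq_of_mul_eq_mul_right hw (by simpa using hij)
    exact Fin.ext this

lemma card_ne_fun (hb : 0 < b) (hw : 1 ≤ w.length) :
    Fintype.card {v : Fin w.length → Fin b // v ≠ (fun j => w.get j)}
      = b ^ w.length - 1 := by
  have h1 := Fintype.card_subtype_compl (fun v : Fin w.length → Fin b => v = fun j => w.get j)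
  simp only [Fintype.card_subtype_eq] at h1
  simpa [Fintype.card_fun] using h1

lemma fiber_card_le (hb : 0 < b) (hw : 1 ≤ w.length) (s : Finset (Fin (l / w.length))) :
    Fintype.card {f : Fin l → Fin b // Bset w f = s}
      ≤ (b ^ w.length - 1) ^ (l / w.length - s.card)
        * b ^ (l - (l / w.length) * w.length) := by
  have hmp : (l / w.length) * w.length ≤ l := Nat.div_mul_le_self l w.length
  classical
  have key : ∀ (f : Fin l → Fin b), Bset w f = s → ∀ i : Fin (l / w.length), i ∈ s →
      ∀ j : Fin w.length,
        f ⟨(i : ℕ) * w.length + j, by have := blk_le w.length i; have := j.isLt; omega⟩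
        = w.get j := by
    intro f hf i hi j
    rw [← hf, Bset, Finset.mem_filter] at hi
    exact (take_drop_eq_iff w f (blk_le w.length i)).1 hi.2 j
  have keyn : ∀ (f : Fin l → Fin b), Bset w f = s → ∀ i : Fin (l / w.length), i ∉ s →
      (fun j : Fin w.length =>
        f ⟨(i : ℕ) * w.length + j, by have := blk_le w.length i; have := j.isLt; omega⟩)
        ≠ (fun j => w.get j) := by
    intro f hf i hi hc
    have hi' : i ∉ Bset w f := by rw [hf]; exact hi
    rw [Bset, Finset.mem_filter] at hi'
    push_neg at hi'
    refine (hi' (Finset.mem_univ _)) ?_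
    rw [take_drop_eq_iff w f (blk_le w.length i)]
    intro j
    exact congrFun hc j
  set G : {f : Fin l → Fin b // Bset w f = s} →
      ((sᶜ : Finset (Fin (l / w.length))) → {v : Fin w.length → Fin b // v ≠ (fun j => w.get j)})
        × (Fin (l - (l / w.length) * w.length) → Fin b) :=
    fun f => (fun i => ⟨fun j => f.1 ⟨(i.1 : ℕ) * w.length + j,
        by have := blk_le w.length i.1; have := j.isLt; omega⟩,
      keyn f.1 f.2 i.1 (Finset.mem_compl.1 i.2)⟩,
      fun j => f.1 ⟨(l / w.length) * w.length + j, by have := j.isLt; omega⟩) with hG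
  have hinj : Function.Injective G := by
    intro f g hfg
    have h1 := congrArg Prod.fst hfg
    have h2 := congrArg Prod.snd hfg
    apply Subtype.ext
    funext x
    rcases lt_or_ge (x : ℕ) ((l / w.length) * w.length) with hx | hx
    · have hp0 : 0 < w.length := hw
      have hid : (x : ℕ) / w.length < l / w.length := (Nat.div_lt_iff_lt_mul hp0).2 hx
      have hmod : (x : ℕ) % w.length < w.length := Nat.mod_lt _ hp0
      have hxe : ((x : ℕ) / w.length) * w.length + (x : ℕ) % w.length = (x : ℕ) := by
        rw [Nat.mul_comm]; exact Nat.div_add_mod _ _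
      have hxx : x = ⟨(((x : ℕ) / w.length : ℕ) : ℕ) * w.length + ((x : ℕ) % w.length),
          by have := blk_le w.length (⟨(x : ℕ) / w.length, hid⟩ : Fin (l / w.length))
             simp only at this; omega⟩ := by
        apply Fin.ext
        simpa using hxe.symm
      by_cases his : (⟨(x : ℕ) / w.length, hid⟩ : Fin (l / w.length)) ∈ s
      · rw [hxx]
        have hf := key f.1 f.2 _ his ⟨(x : ℕ) % w.length, hmod⟩
        have hg := key g.1 g.2 _ his ⟨(x : ℕ) % w.length, hmod⟩
        simp only at hf hg
        rw [hf, hg]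
      · have h3 := congrFun h1 ⟨⟨(x : ℕ) / w.length, hid⟩, Finset.mem_compl.2 his⟩
        have h4 := congrArg Subtype.val h3
        have hj := congrFun h4 ⟨(x : ℕ) % w.length, hmod⟩
        simp only [hG] at hj
        rw [hxx]
        exact hj
    · have hj : (x : ℕ) - (l / w.length) * w.length < l - (l / w.length) * w.length := by
        have := x.isLt; omega
      have h3 := congrFun h2 ⟨(x : ℕ) - (l / w.length) * w.length, hj⟩
      simp only [hG] at h3
      have hxx : x = ⟨(l / w.length) * w.length + ((x : ℕ) - (l / w.length) * w.length),
          by have := x.isLt; omega⟩ := by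
        apply Fin.ext; simp; omega
      rw [hxx]
      exact h3
  calc Fintype.card {f : Fin l → Fin b // Bset w f = s}
      ≤ Fintype.card (((sᶜ : Finset (Fin (l / w.length))) →
          {v : Fin w.length → Fin b // v ≠ (fun j => w.get j)})
            × (Fin (l - (l / w.length) * w.length) → Fin b)) :=
        Fintype.card_le_of_injective G hinj
    _ = (b ^ w.length - 1) ^ (l / w.length - s.card) * b ^ (l - (l / w.length) * w.length) := by
        rw [Fintype.card_prod, Fintype.card_fun, Fintype.card_fun,
          card_ne_fun hb hw, Fintype.card_coe, Finset.card_compl, Fintype.card_fin,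
          Fintype.card_fin, Fintype.card_fin]


lemma count_le (hb : 0 < b) (hw : 1 ≤ w.length) (k : ℕ) :
    (Finset.univ.filter fun f : Fin l → Fin b => occCount w (List.ofFn f) ≤ k).card
      ≤ (∑ i ∈ Finset.range (k + 1),
          (l / w.length).choose i * (b ^ w.length - 1) ^ (l / w.length - i))
        * b ^ (l - (l / w.length) * w.length) := by
  classical
  have hsub : (Finset.univ.filter fun f : Fin l → Fin b => occCount w (List.ofFn f) ≤ k)
      ⊆ (Finset.range (k + 1)).biUnion (fun i =>
          (Finset.powersetCard i (Finset.univ : Finset (Fin (l / w.length)))).biUnion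
            (fun s => Finset.univ.filter fun f : Fin l → Fin b => Bset w f = s)) := by
    intro f hf
    simp only [Finset.mem_filter, Finset.mem_univ, true_and] at hf
    refine Finset.mem_biUnion.2 ⟨(Bset w f).card,
      Finset.mem_range.2 (Nat.lt_succ_of_le (card_Bset_le hw f hf)), ?_⟩
    refine Finset.mem_biUnion.2 ⟨Bset w f,
      Finset.mem_powersetCard.2 ⟨Finset.subset_univ _, rfl⟩, ?_⟩
    simp
  calc (Finset.univ.filter fun f : Fin l → Fin b => occCount w (List.ofFn f) ≤ k).card
      ≤ _ := Finset.card_le_card hsub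
    _ ≤ ∑ i ∈ Finset.range (k + 1),
          ((Finset.powersetCard i (Finset.univ : Finset (Fin (l / w.length)))).biUnion
            (fun s => Finset.univ.filter fun f : Fin l → Fin b => Bset w f = s)).card :=
        Finset.card_biUnion_le
    _ ≤ ∑ i ∈ Finset.range (k + 1),
          ∑ s ∈ Finset.powersetCard i (Finset.univ : Finset (Fin (l / w.length))),
            (Finset.univ.filter fun f : Fin l → Fin b => Bset w f = s).card :=
        Finset.sum_le_sum fun i _ => Finset.card_biUnion_le
    _ ≤ ∑ i ∈ Finset.range (k + 1),
          ∑ s ∈ Finset.powersetCard i (Finset.univ : Finset (Fin (l / w.length))),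
            (b ^ w.length - 1) ^ (l / w.length - i) * b ^ (l - (l / w.length) * w.length) := by
        refine Finset.sum_le_sum fun i _ => Finset.sum_le_sum fun s hs => ?_
        have hcard : s.card = i := (Finset.mem_powersetCard.1 hs).2
        have h1 : (Finset.univ.filter fun f : Fin l → Fin b => Bset w f = s).card
            = Fintype.card {f : Fin l → Fin b // Bset w f = s} :=
          (Fintype.card_subtype _).symm
        rw [h1, ← hcard]
        exact fiber_card_le hb hw s
    _ = (∑ i ∈ Finset.range (k + 1),
          (l / w.length).choose i * (b ^ w.length - 1) ^ (l / w.length - i))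
        * b ^ (l - (l / w.length) * w.length) := by
        rw [Finset.sum_mul]
        refine Finset.sum_congr rfl fun i _ => ?_
        rw [Finset.sum_const, Finset.card_powersetCard, Finset.card_univ, Fintype.card_fin,
          smul_eq_mul, mul_assoc]

lemma sum_Nw_eq (k l : ℕ) :
    ∑ j ∈ Finset.range (k + 1), Nw b w j l
      = (Finset.univ.filter fun f : Fin l → Fin b => occCount w (List.ofFn f) ≤ k).card := by
  classical
  have hpart : (Finset.univ.filter fun f : Fin l → Fin b => occCount w (List.ofFn f) ≤ k)
      = (Finset.range (k + 1)).biUnion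
          (fun j => Finset.univ.filter fun f : Fin l → Fin b => occCount w (List.ofFn f) = j) := by
    ext f
    simp only [Finset.mem_filter, Finset.mem_univ, true_and, Finset.mem_biUnion,
      Finset.mem_range, Nat.lt_succ_iff]
    constructor
    · intro h; exact ⟨_, h, rfl⟩
    · rintro ⟨j, hj, rfl⟩; exact hj
  rw [hpart, Finset.card_biUnion]
  · exact Finset.sum_congr rfl fun j _ => Fintype.card_subtype _
  · intro i _ j _ hij
    simp only [Finset.disjoint_left, Finset.mem_filter, Finset.mem_univ, true_and]
    intro f h1 h2
    exact hij (h1 ▸ h2 ▸ rfl)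

lemma pow_cancel {b : ℕ} (hb : 1 < b) {l mp : ℕ} (h : mp ≤ l) :
    (b : ℝ) ^ (l - mp) * ((b : ℝ)⁻¹) ^ l = ((b : ℝ) ^ mp)⁻¹ := by
  have hb0 : (b : ℝ) ≠ 0 := by positivity
  rw [inv_pow, pow_sub₀ _ hb0 h]
  field_simp

lemma key_bound (hb : 1 < b) (hw : 1 ≤ w.length) (k l : ℕ) :
    (∑ j ∈ Finset.range (k + 1), (Nw b w j l : ℝ)) * ((b : ℝ)⁻¹) ^ l
      ≤ ∑ i ∈ Finset.range (k + 1), (((l / w.length).choose i : ℝ))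
          * ((b ^ w.length - 1 : ℕ) : ℝ) ^ (l / w.length - i)
          * ((((b : ℝ)) ^ w.length)⁻¹) ^ (l / w.length) := by
  have hmp : (l / w.length) * w.length ≤ l := Nat.div_mul_le_self l w.length
  have hnat : ∑ j ∈ Finset.range (k + 1), Nw b w j l
      ≤ (∑ i ∈ Finset.range (k + 1),
          (l / w.length).choose i * (b ^ w.length - 1) ^ (l / w.length - i))
        * b ^ (l - (l / w.length) * w.length) := by
    rw [sum_Nw_eq]
    exact count_le (by omega) hw k
  have hinv : (0:ℝ) ≤ ((b : ℝ)⁻¹) ^ l := by positivity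
  have hcast : (∑ j ∈ Finset.range (k + 1), (Nw b w j l : ℝ))
      ≤ (∑ i ∈ Finset.range (k + 1),
          (((l / w.length).choose i : ℝ)) * ((b ^ w.length - 1 : ℕ) : ℝ) ^ (l / w.length - i))
        * (b : ℝ) ^ (l - (l / w.length) * w.length) := by
    exact_mod_cast hnat
  calc (∑ j ∈ Finset.range (k + 1), (Nw b w j l : ℝ)) * ((b : ℝ)⁻¹) ^ l
      ≤ ((∑ i ∈ Finset.range (k + 1),
          (((l / w.length).choose i : ℝ)) * ((b ^ w.length - 1 : ℕ) : ℝ) ^ (l / w.length - i))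
        * (b : ℝ) ^ (l - (l / w.length) * w.length)) * ((b : ℝ)⁻¹) ^ l :=
        mul_le_mul_of_nonneg_right hcast hinv
    _ = _ := by
        rw [mul_assoc, pow_cancel hb hmp, Finset.sum_mul]
        refine Finset.sum_congr rfl fun i _ => ?_
        rw [← inv_pow, ← inv_pow, ← pow_mul, mul_comm w.length (l / w.length)]

lemma general_tsum (c q : ℝ) (k : ℕ) (hq0 : 0 < q) (hq1 : q < 1) (hc0 : 0 ≤ c)
    (hc : c * q = 1 - q) :
    (Summable fun m : ℕ => ∑ i ∈ Finset.range (k + 1), (m.choose i : ℝ) * c ^ (m - i) * q ^ m)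
    ∧ (∑' m : ℕ, ∑ i ∈ Finset.range (k + 1), (m.choose i : ℝ) * c ^ (m - i) * q ^ m)
        = (k + 1) * q⁻¹ := by
  have hx0 : (0:ℝ) ≤ c * q := mul_nonneg hc0 hq0.le
  have hx1 : c * q < 1 := by rw [hc]; linarith
  have hxpos : (0:ℝ) < c * q := by rw [hc]; linarith
  have hxne : c * q ≠ 0 := ne_of_gt hxpos
  have hqne : q ≠ 0 := ne_of_gt hq0
  have hterm : ∀ i, (fun m : ℕ => (m.choose i : ℝ) * c ^ (m - i) * q ^ m)
      = fun m : ℕ => (q ^ i * ((c * q)⁻¹) ^ i) * ((m.choose i : ℝ) * (c * q) ^ m) := by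
    intro i
    funext m
    rcases lt_or_ge m i with h | h
    · simp [Nat.choose_eq_zero_of_lt h]
    · have h1 : q ^ m = q ^ (m - i) * q ^ i := by rw [← pow_add, Nat.sub_add_cancel h]
      have h2 : (c * q) ^ m = (c * q) ^ (m - i) * (c * q) ^ i := by
        rw [← pow_add, Nat.sub_add_cancel h]
      rw [h1, h2, mul_pow]
      have h3 : ((c * q)⁻¹) ^ i * (c * q) ^ i = 1 := by
        rw [← mul_pow, inv_mul_cancel₀ hxne, one_pow]
      calc (m.choose i : ℝ) * c ^ (m - i) * (q ^ (m - i) * q ^ i)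
          = ((m.choose i : ℝ) * (c ^ (m - i) * q ^ (m - i)) * q ^ i) * 1 := by ring
        _ = ((m.choose i : ℝ) * (c ^ (m - i) * q ^ (m - i)) * q ^ i)
            * (((c * q)⁻¹) ^ i * (c * q) ^ i) := by rw [h3]
        _ = q ^ i * ((c * q)⁻¹) ^ i
            * ((m.choose i : ℝ) * (c ^ (m - i) * q ^ (m - i) * (c * q) ^ i)) := by ring
        _ = _ := by rw [mul_pow]
  have hsummable : ∀ i, Summable
      (fun m : ℕ => (m.choose i : ℝ) * c ^ (m - i) * q ^ m) := by
    intro i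
    rw [hterm i]
    exact (summable_choose_mul i hx0 hx1).mul_left _
  have htsum : ∀ i, (∑' m : ℕ, (m.choose i : ℝ) * c ^ (m - i) * q ^ m) = q⁻¹ := by
    intro i
    rw [hterm i, tsum_mul_left, tsum_choose_mul hx0 hx1 i]
    have h1q : 1 - c * q = q := by rw [hc]; ring
    rw [h1q]
    have h3 : ((c * q)⁻¹) ^ i * (c * q) ^ i = 1 := by
      rw [← mul_pow, inv_mul_cancel₀ hxne, one_pow]
    have h4 : q ^ i * (q⁻¹) ^ i = 1 := by
      rw [← mul_pow, mul_inv_cancel₀ hqne, one_pow]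
    calc q ^ i * ((c * q)⁻¹) ^ i * ((c * q) ^ i * (q⁻¹) ^ (i + 1))
        = (((c * q)⁻¹) ^ i * (c * q) ^ i) * (q ^ i * (q⁻¹) ^ i) * q⁻¹ := by ring
      _ = q⁻¹ := by rw [h3, h4]; ring
  constructor
  · exact summable_sum fun i _ => hsummable i
  · rw [Summable.tsum_finsetSum fun i _ => hsummable i]
    rw [Finset.sum_congr rfl fun i _ => htsum i, Finset.sum_const, Finset.card_range,
      nsmul_eq_mul]
    push_cast
    ring

lemma tsum_div_shift (p : ℕ) (hp : 0 < p) (F : ℕ → ℝ) (hF : Summable F) (hF0 : ∀ m, 0 ≤ F m) :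
    Summable (fun l : ℕ => F (l / p)) ∧ (∑' l : ℕ, F (l / p)) = p * ∑' m : ℕ, F m := by
  haveI : NeZero p := ⟨hp.ne'⟩
  have hfp : Summable (fun mr : ℕ × Fin p => F mr.1) := by
    have h1 : Summable (fun _ : Fin p => (1:ℝ)) := .of_finite
    have := hF.mul_of_nonneg h1 hF0 (fun _ => zero_le_one)
    simpa using this
  have he : (fun l : ℕ => F (l / p)) = (fun mr : ℕ × Fin p => F mr.1) ∘ (Nat.divModEquiv p) := by
    funext l
    simp [Nat.divModEquiv]
  constructor
  · rw [he]
    exact ((Nat.divModEquiv p).summable_iff).2 hfp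
  · rw [he]
    have h2 : ∑' l : ℕ, ((fun mr : ℕ × Fin p => F mr.1) ∘ (Nat.divModEquiv p)) l
        = ∑' mr : ℕ × Fin p, F mr.1 := by
      exact (Nat.divModEquiv p).tsum_eq (fun mr : ℕ × Fin p => F mr.1)
    rw [h2, Summable.tsum_prod' hfp (fun m => Summable.of_finite)]
    have h3 : ∀ m : ℕ, (∑' _ : Fin p, F m) = p * F m := by
      intro m
      rw [tsum_fintype, Finset.sum_const, Finset.card_univ, Fintype.card_fin, nsmul_eq_mul]
    rw [tsum_congr h3, tsum_mul_left]

theorem stmt0 (b : ℕ) (hb : 1 < b) (w : List (Fin b)) (hw : 1 ≤ w.length) (k : ℕ) :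
    (∀ l, Nw b w k l ≤ b ^ l) ∧
    (∀ j ≤ k, Summable fun l : ℕ => (Nw b w j l : ℝ) * ((b : ℝ)⁻¹) ^ l) ∧
    ∑ j ∈ Finset.range (k + 1), ∑' l : ℕ, (Nw b w j l : ℝ) * ((b : ℝ)⁻¹) ^ l ≤
      (w.length : ℝ) * (k + 1) * (b : ℝ) ^ w.length := by
  have hw' : 0 < w.length := hw
  have part1 : ∀ l, Nw b w k l ≤ b ^ l := by
    intro l
    calc Nw b w k l ≤ Fintype.card (Fin l → Fin b) := Fintype.card_subtype_le _
      _ = b ^ l := by simp [Fintype.card_fun]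
  have hBn : 2 ≤ b ^ w.length := by
    calc 2 ≤ b := hb
      _ ≤ b ^ w.length := Nat.le_self_pow (by omega) b
  have hB : (2:ℝ) ≤ (b:ℝ) ^ w.length := by exact_mod_cast hBn
  have hq0 : (0:ℝ) < ((b:ℝ) ^ w.length)⁻¹ := by positivity
  have hq1 : ((b:ℝ) ^ w.length)⁻¹ < 1 := by
    rw [inv_lt_one_iff₀]
    right; linarith
  have hBne : ((b:ℝ) ^ w.length) ≠ 0 := by positivity
  have hc : ((b ^ w.length - 1 : ℕ) : ℝ) = (b:ℝ) ^ w.length - 1 := by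
    have h1 : (1:ℕ) ≤ b ^ w.length := by omega
    push_cast [Nat.cast_sub h1]
    ring
  have hcq : ((b ^ w.length - 1 : ℕ) : ℝ) * ((b:ℝ) ^ w.length)⁻¹
      = 1 - ((b:ℝ) ^ w.length)⁻¹ := by
    rw [hc]
    field_simp
  have hc0 : (0:ℝ) ≤ ((b ^ w.length - 1 : ℕ) : ℝ) := Nat.cast_nonneg _
  obtain ⟨hFs, hFt⟩ := general_tsum ((b ^ w.length - 1 : ℕ) : ℝ) ((b:ℝ) ^ w.length)⁻¹ k
    hq0 hq1 hc0 hcq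
  set F : ℕ → ℝ := fun m => ∑ i ∈ Finset.range (k + 1),
    (m.choose i : ℝ) * ((b ^ w.length - 1 : ℕ) : ℝ) ^ (m - i)
      * (((b:ℝ) ^ w.length)⁻¹) ^ m with hFdef
  have hF0 : ∀ m, 0 ≤ F m := fun m => Finset.sum_nonneg fun i _ => by positivity
  obtain ⟨hGs, hGt⟩ := tsum_div_shift w.length hw' F hFs hF0
  have hkey : ∀ l, (∑ j ∈ Finset.range (k + 1), (Nw b w j l : ℝ)) * ((b:ℝ)⁻¹) ^ l
      ≤ F (l / w.length) := fun l => key_bound hb hw k l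
  have hsumj : ∀ j ≤ k, Summable fun l : ℕ => (Nw b w j l : ℝ) * ((b : ℝ)⁻¹) ^ l := by
    intro j hj
    refine Summable.of_nonneg_of_le (fun l => by positivity) (fun l => ?_) hGs
    calc (Nw b w j l : ℝ) * ((b:ℝ)⁻¹) ^ l
        ≤ (∑ j' ∈ Finset.range (k + 1), (Nw b w j' l : ℝ)) * ((b:ℝ)⁻¹) ^ l := by
          refine mul_le_mul_of_nonneg_right ?_ (by positivity)
          exact Finset.single_le_sum (f := fun j' => (Nw b w j' l : ℝ))
            (fun i _ => Nat.cast_nonneg _) (Finset.mem_range.2 (by omega))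
      _ ≤ F (l / w.length) := hkey l
  refine ⟨part1, hsumj, ?_⟩
  have hsum2 : Summable fun l : ℕ =>
      ∑ j ∈ Finset.range (k + 1), (Nw b w j l : ℝ) * ((b:ℝ)⁻¹) ^ l :=
    summable_sum fun j hj => hsumj j (by simpa [Nat.lt_succ_iff] using hj)
  have hsum2' : Summable fun l : ℕ =>
      (∑ j ∈ Finset.range (k + 1), (Nw b w j l : ℝ)) * ((b:ℝ)⁻¹) ^ l := by
    have he : (fun l : ℕ => (∑ j ∈ Finset.range (k + 1), (Nw b w j l : ℝ)) * ((b:ℝ)⁻¹) ^ l)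
        = fun l : ℕ => ∑ j ∈ Finset.range (k + 1), (Nw b w j l : ℝ) * ((b:ℝ)⁻¹) ^ l := by
      funext l
      rw [Finset.sum_mul]
    rw [he]
    exact hsum2
  calc ∑ j ∈ Finset.range (k + 1), ∑' l : ℕ, (Nw b w j l : ℝ) * ((b : ℝ)⁻¹) ^ l
      = ∑' l : ℕ, ∑ j ∈ Finset.range (k + 1), (Nw b w j l : ℝ) * ((b : ℝ)⁻¹) ^ l :=
        (Summable.tsum_finsetSum fun j hj => hsumj j (by simpa [Nat.lt_succ_iff] using hj)).symm
    _ = ∑' l : ℕ, (∑ j ∈ Finset.range (k + 1), (Nw b w j l : ℝ)) * ((b:ℝ)⁻¹) ^ l :=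
        tsum_congr fun l => (Finset.sum_mul _ _ _).symm
    _ ≤ ∑' l : ℕ, F (l / w.length) := Summable.tsum_le_tsum hkey hsum2' hGs
    _ = (w.length : ℝ) * ∑' m : ℕ, F m := hGt
    _ = (w.length : ℝ) * ((k + 1) * (((b:ℝ) ^ w.length)⁻¹)⁻¹) := by rw [hFt]
    _ = (w.length : ℝ) * (k + 1) * (b : ℝ) ^ w.length := by
        rw [inv_inv]
        ring
end

section
/- For every k ≥ 0, the number of length-l strings containing exactly k occurrences of w is bounded by Σ_{0≤i≤k} C(q,i)(b^p-1)^{q-i} · b^r, where l = qp + r with 0 ≤ r < p. -/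
open scoped BigOperators

lemma card_fiber_le {A : Type*} [DecidableEq A] [Fintype A] {q : ℕ} (a₀ : A)
    (s : Finset (Fin q)) :
    ((Finset.univ : Finset (Fin q → A)).filter
        (fun g => (Finset.univ.filter fun j => g j = a₀) = s)).card
      ≤ (Fintype.card A - 1) ^ (q - s.card) := by
  classical
  set t : Finset ({j : Fin q // j ∉ s} → A) :=
    Finset.univ.filter (fun h => ∀ jc, h jc ≠ a₀) with ht
  have htcard : t.card = (Fintype.card A - 1) ^ (q - s.card) := by
    have h1 : t.card = Fintype.card {h : {j : Fin q // j ∉ s} → A // ∀ jc, h jc ≠ a₀} := by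
      rw [Fintype.card_subtype]
    rw [h1, Fintype.card_congr (Equiv.subtypePiEquivPi (p := fun _ a => a ≠ a₀)),
      Fintype.card_fun]
    congr 1
    · have := Fintype.card_subtype_compl (fun a : A => a = a₀)
      rw [Fintype.card_subtype_eq] at this
      exact this
    · have := Fintype.card_subtype_compl (fun j : Fin q => j ∈ s)
      simp only [Fintype.card_coe, Fintype.card_fin] at this
      exact this
  rw [← htcard]
  apply Finset.card_le_card_of_injOn (fun g jc => g jc.1)
  · intro g hg
    simp only [Finset.mem_coe, Finset.mem_filter, Finset.mem_univ, true_and] at hg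
    simp only [Finset.mem_coe, ht, Finset.mem_filter, Finset.mem_univ, true_and]
    intro jc hja
    have : jc.1 ∈ Finset.univ.filter fun j => g j = a₀ :=
      Finset.mem_filter.2 ⟨Finset.mem_univ _, hja⟩
    rw [hg] at this
    exact jc.2 this
  · intro g hg g' hg' hgg'
    simp only [Finset.coe_filter, Set.mem_setOf_eq, Finset.mem_univ, true_and] at hg hg'
    funext j
    by_cases hj : j ∈ s
    · rw [← hg] at hj
      have h1 := (Finset.mem_filter.1 hj).2
      rw [hg, ← hg'] at hj
      have h2 := (Finset.mem_filter.1 hj).2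
      rw [h1, h2]
    · exact congrFun hgg' ⟨j, hj⟩

lemma count_le_sum {A : Type*} [DecidableEq A] [Fintype A] (q k : ℕ) (a₀ : A) :
    (Finset.univ.filter fun g : Fin q → A =>
        (Finset.univ.filter fun j => g j = a₀).card ≤ k).card ≤
      ∑ i ∈ Finset.range (k+1), Nat.choose q i * (Fintype.card A - 1) ^ (q - i) := by
  classical
  have hmaps : ∀ g ∈ (Finset.univ.filter fun g : Fin q → A =>
      (Finset.univ.filter fun j => g j = a₀).card ≤ k),
      (Finset.univ.filter fun j => g j = a₀) ∈
        (Finset.univ.powerset.filter fun s : Finset (Fin q) => s.card ≤ k) := by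
    intro g hg
    simp only [Finset.mem_filter, Finset.mem_univ, true_and, Finset.mem_powerset] at hg ⊢
    exact ⟨Finset.subset_univ _, hg⟩
  rw [Finset.card_eq_sum_card_fiberwise hmaps]
  have step1 : ∑ s ∈ (Finset.univ.powerset.filter fun s : Finset (Fin q) => s.card ≤ k),
      ((Finset.univ.filter fun g : Fin q → A =>
        (Finset.univ.filter fun j => g j = a₀).card ≤ k).filter
        (fun g => (Finset.univ.filter fun j => g j = a₀) = s)).card
      ≤ ∑ s ∈ (Finset.univ.powerset.filter fun s : Finset (Fin q) => s.card ≤ k),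
          (Fintype.card A - 1) ^ (q - s.card) := by
    apply Finset.sum_le_sum
    intro s hs
    calc _ ≤ ((Finset.univ : Finset (Fin q → A)).filter
        (fun g => (Finset.univ.filter fun j => g j = a₀) = s)).card := by
          apply Finset.card_le_card
          exact Finset.filter_subset_filter _ (Finset.filter_subset _ _)
      _ ≤ _ := card_fiber_le a₀ s
  refine step1.trans ?_
  have hmaps2 : ∀ s ∈ (Finset.univ.powerset.filter fun s : Finset (Fin q) => s.card ≤ k),
      s.card ∈ Finset.range (k+1) := by
    intro s hs
    simp only [Finset.mem_filter] at hs
    exact Finset.mem_range.2 (Nat.lt_succ_of_le hs.2)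
  rw [← Finset.sum_fiberwise_of_maps_to hmaps2 (fun s => (Fintype.card A - 1) ^ (q - s.card))]
  apply Finset.sum_le_sum
  intro i hi
  have hfil : (Finset.univ.powerset.filter fun s : Finset (Fin q) => s.card ≤ k).filter
      (fun s => s.card = i) = Finset.powersetCard i Finset.univ := by
    ext s
    simp only [Finset.mem_filter, Finset.mem_powerset, Finset.mem_powersetCard]
    constructor
    · rintro ⟨⟨h1, h2⟩, h3⟩; exact ⟨h1, h3⟩
    · rintro ⟨h1, h2⟩
      exact ⟨⟨h1, h2 ▸ Nat.lt_succ_iff.1 (Finset.mem_range.1 hi)⟩, h2⟩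
  rw [hfil]
  rw [Finset.sum_congr rfl (fun s hs => by
    rw [(Finset.mem_powersetCard.1 hs).2]), Finset.sum_const, Finset.card_powersetCard,
    Finset.card_univ, Fintype.card_fin, smul_eq_mul]

lemma main_aux (b p k l : ℕ) (hp : 0 < p) (a₀ : Fin p → Fin b) :
    Nw b (List.ofFn a₀) k l ≤
      ∑ i ∈ Finset.range (k + 1),
        Nat.choose (l / p) i * (b ^ p - 1) ^ (l / p - i) * b ^ (l % p) := by
  classical
  set q := l / p with hq
  set r := l % p with hr
  have hqp : q * p ≤ l := by rw [hq]; exact Nat.div_mul_le_self l p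
  have hl : q * p + r = l := by rw [hq, hr, mul_comm]; exact Nat.div_add_mod l p
  have hjp : ∀ j : Fin q, (j : ℕ) * p + p ≤ l := by
    intro j
    have h1 : ((j:ℕ)+1) * p ≤ q * p := Nat.mul_le_mul_right _ j.2
    have h3 : (j:ℕ)*p + p = ((j:ℕ)+1)*p := by ring
    omega
  have hjlt : ∀ (j : Fin q) (i : Fin p), (j : ℕ) * p + (i : ℕ) < l := by
    intro j i
    have := hjp j
    have := i.2
    omega
  have hrlt : ∀ i : Fin r, q * p + (i:ℕ) < l := by
    intro i
    have := i.2
    omega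
  have hcard : Nw b (List.ofFn a₀) k l ≤
      Fintype.card {x : (Fin q → (Fin p → Fin b)) × (Fin r → Fin b) //
        (Finset.univ.filter fun j => x.1 j = a₀).card ≤ k} := by
    simp only [Nw]
    have hcount : ∀ f : {f : Fin l → Fin b // occCount (List.ofFn a₀) (List.ofFn f) = k},
        (Finset.univ.filter fun j : Fin q =>
          (fun i : Fin p => f.1 ⟨(j:ℕ)*p + i, hjlt j i⟩) = a₀).card ≤ k := by
      intro f
      have hocc : occCount (List.ofFn a₀) (List.ofFn f.1) =
          ((Finset.range l).filter fun i =>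
            ((List.ofFn f.1).drop i).take p = List.ofFn a₀).card := by
        rw [occCount_eq_card]
        simp only [List.length_ofFn]
      have hk := f.2
      rw [hocc] at hk
      refine le_trans ?_ (le_of_eq hk)
      apply Finset.card_le_card_of_injOn (fun j : Fin q => (j:ℕ) * p)
      · intro j hj
        simp only [Finset.mem_coe, Finset.mem_filter, Finset.mem_univ, true_and] at hj
        rw [Finset.mem_coe, Finset.mem_filter, Finset.mem_range]
        beta_reduce
        refine ⟨by have := hjp j; omega, ?_⟩
        apply List.ext_getElem
        · simp only [List.length_take, List.length_drop, List.length_ofFn]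
          have := hjp j
          omega
        · intro n h₁ h₂
          rw [List.getElem_take, List.getElem_drop, List.getElem_ofFn, List.getElem_ofFn]
          have hn : n < p := by simpa using h₂
          have e := congrFun hj ⟨n, hn⟩
          simpa using e
      · intro j _ j' _ hjj'
        exact Fin.ext (Nat.eq_of_mul_eq_mul_right hp hjj')
    apply Fintype.card_le_of_injective
      (fun f => ⟨(fun j i => f.1 ⟨(j:ℕ)*p + i, hjlt j i⟩, fun i => f.1 ⟨q*p + i, hrlt i⟩),
        hcount f⟩)
    intro f f' hff'
    simp only [Subtype.mk.injEq, Prod.mk.injEq] at hff'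
    obtain ⟨hg, hh⟩ := hff'
    apply Subtype.ext
    funext m
    by_cases hm : (m:ℕ) < q * p
    · have hj : (m:ℕ) / p < q := (Nat.div_lt_iff_lt_mul hp).2 hm
      have hi : (m:ℕ) % p < p := Nat.mod_lt _ hp
      have e1 := congrFun (congrFun hg ⟨(m:ℕ)/p, hj⟩) ⟨(m:ℕ)%p, hi⟩
      have hmeq : (m:ℕ)/p * p + (m:ℕ) % p = (m:ℕ) := by
        rw [mul_comm]; exact Nat.div_add_mod _ _
      have h2 : (⟨(m:ℕ)/p * p + (m:ℕ)%p, hjlt ⟨(m:ℕ)/p, hj⟩ ⟨(m:ℕ)%p, hi⟩⟩ : Fin l) = m :=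
        Fin.ext hmeq
      rw [← h2]
      exact e1
    · have him : (m:ℕ) - q*p < r := by have := m.2; omega
      have e1 := congrFun hh ⟨(m:ℕ) - q*p, him⟩
      have h2 : (⟨q*p + ((m:ℕ) - q*p), hrlt ⟨(m:ℕ) - q*p, him⟩⟩ : Fin l) = m :=
        Fin.ext (show q * p + ((m:ℕ) - q * p) = (m:ℕ) from by omega)
      rw [← h2]
      exact e1
  refine hcard.trans ?_
  have hcardC : Fintype.card {x : (Fin q → (Fin p → Fin b)) × (Fin r → Fin b) //
      (Finset.univ.filter fun j => x.1 j = a₀).card ≤ k}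
      = (Finset.univ.filter fun g : Fin q → (Fin p → Fin b) =>
          (Finset.univ.filter fun j => g j = a₀).card ≤ k).card * b ^ r := by
    rw [Fintype.card_congr (Equiv.prodSubtypeFstEquivSubtypeProd
      (p := fun g : Fin q → (Fin p → Fin b) =>
        (Finset.univ.filter fun j => g j = a₀).card ≤ k)),
      Fintype.card_prod, Fintype.card_subtype, Fintype.card_fun, Fintype.card_fin,
      Fintype.card_fin]
  rw [hcardC]
  have hbound := count_le_sum (A := Fin p → Fin b) q k a₀
  have hA : Fintype.card (Fin p → Fin b) = b ^ p := by
    rw [Fintype.card_fun, Fintype.card_fin, Fintype.card_fin]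
  rw [hA] at hbound
  calc _ ≤ (∑ i ∈ Finset.range (k+1), Nat.choose q i * (b ^ p - 1) ^ (q - i)) * b ^ r :=
        Nat.mul_le_mul_right _ hbound
    _ = _ := by rw [Finset.sum_mul]


/-- Writing `l = q·p + r` with `0 ≤ r < p`, the number of length-`l` strings with exactly
`k` occurrences of `w` is at most `Σ_{0≤i≤k} C(q,i) (b^p-1)^{q-i} · b^r`. -/
theorem stmt2 (b : ℕ) (hb : 1 < b) (w : List (Fin b)) (hw : 1 ≤ w.length) (k l : ℕ) :
    Nw b w k l ≤
      ∑ i ∈ Finset.range (k + 1),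
        Nat.choose (l / w.length) i * (b ^ w.length - 1) ^ (l / w.length - i) *
          b ^ (l % w.length) := by
  have h := main_aux b w.length k l hw w.get
  rwa [List.ofFn_get] at h
end

section
/- For every k ≥ 0, the harmonic-type series S_w(k) = Σ 1/m, summed over positive integers m whose minimal b-ary representation contains exactly k occurrences of the block w, is finite; moreover S_w(k) ≤ b · Z_w(k)(1/b) where Z_w(k)(t) = Σ_l N_w(k,l) t^l. -/
open scoped BigOperators

/-- The general term of the series `S_w(k)`: `1/m` if the minimal base-`b` representation
of the positive integer `m` contains exactly `k` occurrences of `w`, and `0` otherwise. -/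
noncomputable def Sterm (b : ℕ) (w : List (Fin b)) (k m : ℕ) : ℝ :=
  if m ≠ 0 ∧ occCount (w.map Fin.val) (Nat.digits b m).reverse = k then (m : ℝ)⁻¹ else 0

lemma occCount_map {α β : Type*} [DecidableEq α] [DecidableEq β] (g : α → β)
    (hg : Function.Injective g) (w X : List α) :
    occCount (w.map g) (X.map g) = occCount w X := by
  unfold occCount
  simp only [List.length_map]
  congr 1
  apply List.filter_congr
  intro i _
  simp only [← List.map_drop, ← List.map_take, decide_eq_decide]
  exact ⟨fun h => List.map_injective_iff.mpr hg h, fun h => by rw [h]⟩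

lemma ofFn_drop_take {b l : ℕ} (f : Fin l → Fin b) (i p : ℕ) (h : i + p ≤ l) :
    ((List.ofFn f).drop i).take p = List.ofFn (fun t : Fin p => f ⟨i + t, by omega⟩) := by
  apply List.ext_getElem
  · simp; omega
  · intro n h1 h2
    simp [List.getElem_take, List.getElem_drop]

lemma card_forbidden (b : ℕ) (hb : 1 < b) (w : List (Fin b)) (hw : 1 ≤ w.length) (l : ℕ)
    (U : Finset ℕ) (hU : U ⊆ Finset.range (l / w.length)) :
    (Finset.univ.filter fun f : Fin l → Fin b =>
        ∀ j ∈ U, ((List.ofFn f).drop (j * w.length)).take w.length ≠ w).card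
      ≤ (b ^ w.length - 1) ^ U.card * b ^ (l - w.length * U.card) := by
  classical
  have hp0 : 0 < w.length := hw
  have hjl : ∀ j ∈ U, j * w.length + w.length ≤ l := by
    intro j hj
    have hjq : j < l / w.length := Finset.mem_range.mp (hU hj)
    have h1 : (j + 1) * w.length ≤ (l / w.length) * w.length :=
      Nat.mul_le_mul_right _ hjq
    have h2 : (l / w.length) * w.length ≤ l := Nat.div_mul_le_self _ _
    rw [add_mul, one_mul] at h1
    omega
  have hidx : ∀ j ∈ U, ∀ t : Fin w.length, j * w.length + (t : ℕ) < l := by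
    intro j hj t
    have := hjl j hj
    have := t.2
    omega
  let wf : Fin w.length → Fin b := fun t => w.get t
  let D := ({j // j ∈ U} → {g : Fin w.length → Fin b // g ≠ wf}) ×
    ({i : Fin l // ¬ ((i : ℕ) / w.length ∈ U)} → Fin b)
  rw [← Fintype.card_subtype]
  have hcard : Fintype.card D = (b ^ w.length - 1) ^ U.card * b ^ (l - w.length * U.card) := by
    have e : {i : Fin l // (i : ℕ) / w.length ∈ U} ≃ ({j // j ∈ U} × Fin w.length) :=
      { toFun := fun i => (⟨(i : ℕ) / w.length, i.2⟩, ⟨(i : ℕ) % w.length, Nat.mod_lt _ hp0⟩)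
        invFun := fun jt => ⟨⟨(jt.1 : ℕ) * w.length + (jt.2 : ℕ), hidx _ jt.1.2 jt.2⟩, by
          have h1 : ((jt.1 : ℕ) * w.length + (jt.2 : ℕ)) / w.length = (jt.1 : ℕ) := by
            rw [add_comm, Nat.add_mul_div_right _ _ hp0, Nat.div_eq_of_lt jt.2.2, zero_add]
          simp only [h1]
          exact jt.1.2⟩
        left_inv := by
          intro i
          apply Subtype.ext
          apply Fin.ext
          simp only []
          rw [mul_comm]
          exact Nat.div_add_mod _ _
        right_inv := by
          intro jt
          have h1 : ((jt.1 : ℕ) * w.length + (jt.2 : ℕ)) / w.length = (jt.1 : ℕ) := by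
            rw [add_comm, Nat.add_mul_div_right _ _ hp0, Nat.div_eq_of_lt jt.2.2, zero_add]
          have h2 : ((jt.1 : ℕ) * w.length + (jt.2 : ℕ)) % w.length = (jt.2 : ℕ) := by
            rw [add_comm, Nat.add_mul_mod_self_right, Nat.mod_eq_of_lt jt.2.2]
          ext <;> simp [h1, h2] }
    have hcard_in : Fintype.card {i : Fin l // (i : ℕ) / w.length ∈ U} = U.card * w.length := by
      rw [Fintype.card_congr e, Fintype.card_prod, Fintype.card_coe, Fintype.card_fin]
    rw [Fintype.card_prod, Fintype.card_fun, Fintype.card_fun, Fintype.card_subtype_compl,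
      Fintype.card_subtype_eq, Fintype.card_coe, Fintype.card_fin, Fintype.card_fun,
      Fintype.card_fin, Fintype.card_subtype_compl, hcard_in, Fintype.card_fin]
    rw [Fintype.card_fin]
    ring_nf
  rw [← hcard]
  let Phi : {f : Fin l → Fin b //
      ∀ j ∈ U, ((List.ofFn f).drop (j * w.length)).take w.length ≠ w} → D :=
    fun f => (fun j => ⟨fun t => f.1 ⟨(j : ℕ) * w.length + (t : ℕ), hidx j j.2 t⟩, by
        intro hgw
        apply f.2 (j : ℕ) j.2
        rw [ofFn_drop_take f.1 _ _ (hjl j j.2)]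
        rw [hgw]
        exact List.ofFn_get w⟩,
      fun i => f.1 i.1)
  apply Fintype.card_le_of_injective Phi
  intro f1 f2 hf
  apply Subtype.ext
  funext i
  by_cases hi : (i : ℕ) / w.length ∈ U
  · have h1 := congrFun (congrArg Prod.fst hf) ⟨(i : ℕ) / w.length, hi⟩
    have h2 := congrFun (congrArg Subtype.val h1) ⟨(i : ℕ) % w.length, Nat.mod_lt _ hp0⟩
    have hix : ((i : ℕ) / w.length) * w.length + (i : ℕ) % w.length = (i : ℕ) := by
      rw [mul_comm]
      exact Nat.div_add_mod _ _
    have hfin : (⟨((i : ℕ) / w.length) * w.length + (i : ℕ) % w.length, by omega⟩ : Fin l) = i :=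
      Fin.ext hix
    simpa [hfin, Phi] using h2
  · exact congrFun (congrArg Prod.snd hf) ⟨i, hi⟩

lemma Nw_le_sum (b : ℕ) (hb : 1 < b) (w : List (Fin b)) (hw : 1 ≤ w.length) (k l : ℕ) :
    Nw b w k l ≤ ∑ T ∈ (Finset.range (l / w.length)).powerset.filter (fun T => T.card ≤ k),
      (b ^ w.length - 1) ^ (l / w.length - T.card)
        * b ^ (l - w.length * (l / w.length - T.card)) := by
  classical
  have hp0 : 0 < w.length := hw
  -- the block-pattern finset of f
  let S : (Fin l → Fin b) → Finset ℕ := fun f =>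
    (Finset.range (l / w.length)).filter
      fun j => ((List.ofFn f).drop (j * w.length)).take w.length = w
  have hjlt : ∀ j < l / w.length, j * w.length < l := by
    intro j hj
    have h1 : (j + 1) * w.length ≤ (l / w.length) * w.length := Nat.mul_le_mul_right _ hj
    have h2 : (l / w.length) * w.length ≤ l := Nat.div_mul_le_self _ _
    rw [add_mul, one_mul] at h1
    omega
  have hS : ∀ f : Fin l → Fin b, occCount w (List.ofFn f) = k → (S f).card ≤ k := by
    intro f hf
    rw [occCount_eq_card, List.length_ofFn] at hf
    rw [← hf]
    apply Finset.card_le_card_of_injOn (fun j => j * w.length)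
    · intro j hj
      simp only [S, Finset.mem_coe, Finset.mem_filter, Finset.mem_range] at hj ⊢
      exact ⟨hjlt j hj.1, hj.2⟩
    · intro a _ c _ hac
      exact Nat.eq_of_mul_eq_mul_right hp0 hac
  have hNw : Nw b w k l
      = (Finset.univ.filter fun f : Fin l → Fin b => occCount w (List.ofFn f) = k).card :=
    Fintype.card_subtype _
  rw [hNw]
  -- restrict to the set with small pattern
  have hsub : (Finset.univ.filter fun f : Fin l → Fin b => occCount w (List.ofFn f) = k)
      ⊆ (Finset.univ.filter fun f : Fin l → Fin b => (S f).card ≤ k) := by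
    intro f hf
    simp only [Finset.mem_filter, Finset.mem_univ, true_and] at hf ⊢
    exact hS f hf
  refine le_trans (Finset.card_le_card hsub) ?_
  -- fiberwise decomposition
  rw [Finset.card_eq_sum_card_fiberwise
    (f := S) (t := (Finset.range (l / w.length)).powerset.filter (fun T => T.card ≤ k)) ?side]
  case side =>
    intro f hf
    simp only [Finset.mem_coe, Finset.mem_filter, Finset.mem_univ, true_and] at hf
    simp only [Finset.mem_coe, Finset.mem_filter, Finset.mem_powerset]
    exact ⟨Finset.filter_subset _ _, hf⟩
  apply Finset.sum_le_sum
  intro T hT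
  simp only [Finset.mem_filter, Finset.mem_powerset] at hT
  have hUcard : ((Finset.range (l / w.length)) \ T).card = l / w.length - T.card := by
    rw [Finset.card_sdiff_of_subset hT.1, Finset.card_range]
  rw [← hUcard]
  refine le_trans (Finset.card_le_card ?_) (card_forbidden b hb w hw l _ Finset.sdiff_subset)
  intro f hf
  simp only [Finset.mem_filter, Finset.mem_univ, true_and] at hf ⊢
  intro j hj
  rw [Finset.mem_sdiff, Finset.mem_range] at hj
  intro hblock
  apply hj.2
  rw [← hf.2]
  simp only [S, Finset.mem_filter, Finset.mem_range]
  exact ⟨hj.1, hblock⟩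

lemma card_T_le (q k : ℕ) :
    ((Finset.range q).powerset.filter (fun T => T.card ≤ k)).card ≤ (k+1) * (q+1)^k := by
  classical
  rw [Finset.card_eq_sum_card_fiberwise (f := Finset.card) (t := Finset.range (k+1))
    (fun T hT => by
      simp only [Finset.mem_coe, Finset.mem_filter] at hT
      exact Finset.mem_range.mpr (Nat.lt_succ_of_le hT.2))]
  have hstep : ∀ j ∈ Finset.range (k+1),
      (((Finset.range q).powerset.filter (fun T => T.card ≤ k)).filter
        (fun T => T.card = j)).card ≤ (q+1)^k := by
    intro j hj
    have hsub : (((Finset.range q).powerset.filter (fun T => T.card ≤ k)).filter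
        (fun T => T.card = j)) ⊆ (Finset.range q).powersetCard j := by
      intro T hT
      simp only [Finset.mem_filter, Finset.mem_powerset] at hT
      exact Finset.mem_powersetCard.mpr ⟨hT.1.1, hT.2⟩
    refine le_trans (Finset.card_le_card hsub) ?_
    rw [Finset.card_powersetCard, Finset.card_range]
    calc q.choose j ≤ q ^ j := Nat.choose_le_pow q j
      _ ≤ (q+1) ^ j := Nat.pow_le_pow_left (by omega) j
      _ ≤ (q+1) ^ k := Nat.pow_le_pow_right (by omega) (by
          exact Nat.lt_succ_iff.mp (Finset.mem_range.mp hj))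
  refine le_trans (Finset.sum_le_sum hstep) ?_
  rw [Finset.sum_const, Finset.card_range, smul_eq_mul]

lemma term_bound (b : ℕ) (hb : 1 < b) (w : List (Fin b)) (hw : 1 ≤ w.length) (k l : ℕ) :
    (Nw b w k l : ℝ) * ((b : ℝ)⁻¹) ^ l
      ≤ ((k+1) * (l+1)^k : ℝ) *
        (((b ^ w.length - 1 : ℕ) : ℝ) / (b : ℝ) ^ w.length) ^ (l / w.length - k) := by
  classical
  set p := w.length with hp
  set q := l / p with hq
  set r : ℝ := ((b ^ p - 1 : ℕ) : ℝ) / (b : ℝ) ^ p with hr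
  have hb0 : (0 : ℝ) < (b : ℝ) := by positivity
  have hbp0 : (0 : ℝ) < (b : ℝ) ^ p := by positivity
  have hr0 : 0 ≤ r := by positivity
  have hr1 : r ≤ 1 := by
    rw [hr, div_le_one hbp0]
    calc ((b ^ p - 1 : ℕ) : ℝ) ≤ ((b ^ p : ℕ) : ℝ) := by exact_mod_cast Nat.sub_le _ _
      _ = (b : ℝ) ^ p := by push_cast; ring
  have hqp : p * q ≤ l := by
    rw [hq, hp]
    rw [mul_comm]
    exact Nat.div_mul_le_self _ _
  have h1 := Nw_le_sum b hb w hw k l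
  have h2 : (Nw b w k l : ℝ) * ((b : ℝ)⁻¹) ^ l
      ≤ (∑ T ∈ (Finset.range q).powerset.filter (fun T => T.card ≤ k),
          ((b ^ p - 1) ^ (q - T.card) * b ^ (l - p * (q - T.card)) : ℕ)) * ((b : ℝ)⁻¹) ^ l := by
    apply mul_le_mul_of_nonneg_right _ (by positivity)
    exact_mod_cast h1
  refine le_trans h2 ?_
  rw [Nat.cast_sum, Finset.sum_mul]
  have hterm : ∀ T ∈ (Finset.range q).powerset.filter (fun T => T.card ≤ k),
      (((b ^ p - 1) ^ (q - T.card) * b ^ (l - p * (q - T.card)) : ℕ) : ℝ) * ((b : ℝ)⁻¹) ^ l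
        ≤ r ^ (q - k) := by
    intro T hT
    simp only [Finset.mem_filter, Finset.mem_powerset] at hT
    have hm : q - T.card ≤ q := Nat.sub_le _ _
    have hpm : p * (q - T.card) ≤ l := le_trans (Nat.mul_le_mul_left _ hm) hqp
    have heq : (((b ^ p - 1) ^ (q - T.card) * b ^ (l - p * (q - T.card)) : ℕ) : ℝ)
        * ((b : ℝ)⁻¹) ^ l = r ^ (q - T.card) := by
      push_cast [Nat.cast_pow]
      rw [pow_sub₀ (b : ℝ) (ne_of_gt hb0) hpm]
      rw [hr, div_pow, pow_mul]
      field_simp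
      rw [mul_assoc, ← mul_pow, mul_one_div_cancel (ne_of_gt hb0), one_pow, mul_one]
    rw [heq]
    apply pow_le_pow_of_le_one hr0 hr1
    exact Nat.sub_le_sub_left hT.2 q
  refine le_trans (Finset.sum_le_sum hterm) ?_
  rw [Finset.sum_const]
  rw [nsmul_eq_mul]
  apply mul_le_mul_of_nonneg_right _ (by positivity)
  calc (((Finset.range q).powerset.filter (fun T => T.card ≤ k)).card : ℝ)
      ≤ ((k+1) * (q+1)^k : ℕ) := by exact_mod_cast card_T_le q k
    _ ≤ ((k+1) * (l+1)^k : ℝ) := by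
        push_cast
        apply mul_le_mul_of_nonneg_left _ (by positivity)
        apply pow_le_pow_left₀ (by positivity)
        have : q ≤ l := Nat.div_le_self _ _
        exact_mod_cast by omega

set_option maxHeartbeats 1000000 in
lemma summable_aux (p k : ℕ) (hp : 0 < p) (r : ℝ) (hr0 : 0 < r) (hr1 : r < 1) :
    Summable fun l : ℕ => ((k+1) * (l+1)^k : ℝ) * r ^ (l / p - k) := by
  set ρ : ℝ := r ^ ((p : ℝ)⁻¹) with hρ
  have hρ0 : 0 < ρ := Real.rpow_pos_of_pos hr0 _
  have hρ1 : ρ < 1 := Real.rpow_lt_one hr0.le hr1 (by positivity)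
  set C : ℝ := r ^ (-(k + 1 : ℝ)) with hC
  have hC0 : 0 < C := Real.rpow_pos_of_pos hr0 _
  have base : Summable (fun n : ℕ => (n : ℝ) ^ k * ρ ^ n) :=
    summable_pow_mul_geometric_of_norm_lt_one k
      (by rw [Real.norm_eq_abs, abs_of_pos hρ0]; exact hρ1)
  have shift : Summable (fun n : ℕ => ((n + 1 : ℕ) : ℝ) ^ k * ρ ^ (n + 1)) :=
    (summable_nat_add_iff 1).mpr base
  have hsum : Summable (fun n : ℕ =>
      ((k + 1 : ℝ) * C * ρ⁻¹) * (((n + 1 : ℕ) : ℝ) ^ k * ρ ^ (n + 1))) :=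
    shift.mul_left _
  refine Summable.of_nonneg_of_le ?_ ?_ hsum
  · intro l
    positivity
  · intro l
    have key : r ^ (l / p - k) ≤ C * ρ ^ l := by
      have hcast : (l : ℝ) / p - (k + 1) ≤ ((l / p - k : ℕ) : ℝ) := by
        have hd : (l : ℝ) / p < ((l / p : ℕ) : ℝ) + 1 := by
          rw [div_lt_iff₀ (show (0:ℝ) < (p:ℝ) by exact_mod_cast hp)]
          have h1 : p * (l / p) + l % p = l := Nat.div_add_mod _ _
          have h2 : l % p < p := Nat.mod_lt _ hp
          have h3 : l < (l / p + 1) * p := by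
            have h1' : l / p * p + l % p = l := by rw [mul_comm]; exact h1
            rw [add_mul, one_mul]; omega
          exact_mod_cast h3
        by_cases hk : k ≤ l / p
        · rw [Nat.cast_sub hk]
          have : ((l / p : ℕ) : ℝ) - k ≥ (l : ℝ) / p - 1 - k := by linarith
          linarith
        · have : l / p - k = 0 := by omega
          rw [this]
          have : ((l / p : ℕ) : ℝ) ≥ 0 := by positivity
          have hk' : ((l / p : ℕ) : ℝ) < k := by exact_mod_cast by omega
          simp only [Nat.cast_zero]
          nlinarith
      calc r ^ (l / p - k) = r ^ (((l / p - k : ℕ) : ℝ)) := (Real.rpow_natCast r _).symm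
        _ ≤ r ^ ((l : ℝ) / p - (k + 1)) :=
            Real.rpow_le_rpow_of_exponent_ge hr0 hr1.le hcast
        _ = C * ρ ^ l := by
            rw [show (l : ℝ) / p - (k + 1) = (-(k + 1 : ℝ)) + (p : ℝ)⁻¹ * l by field_simp; ring]
            rw [Real.rpow_add hr0, hC, hρ]
            congr 1
            rw [Real.rpow_mul hr0.le, Real.rpow_natCast]
    calc ((k+1) * (l+1)^k : ℝ) * r ^ (l / p - k)
        ≤ ((k+1) * (l+1)^k : ℝ) * (C * ρ ^ l) := by
          apply mul_le_mul_of_nonneg_left key (by positivity)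
      _ = ((k + 1 : ℝ) * C * ρ⁻¹) * (((l + 1 : ℕ) : ℝ) ^ k * ρ ^ (l + 1)) := by
          rw [pow_succ]
          push_cast
          field_simp

lemma digFun_aux (b m : ℕ) (hb : 1 < b) (i : ℕ) (h : i < (Nat.digits b m).reverse.length) :
    (Nat.digits b m).reverse[i] < b :=
  Nat.digits_lt_base hb (List.mem_reverse.mp (List.getElem_mem h))

def digFun (b m : ℕ) (hb : 1 < b) : Fin ((Nat.digits b m).length) → Fin b :=
  fun i => ⟨(Nat.digits b m).reverse[(i : ℕ)]'(by simpa using i.2), digFun_aux b m hb _ _⟩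

lemma digFun_map (b m : ℕ) (hb : 1 < b) :
    (List.ofFn (digFun b m hb)).map Fin.val = (Nat.digits b m).reverse := by
  apply List.ext_getElem
  · simp
  · intro i h1 h2
    simp [digFun]

lemma digFun_occ (b m : ℕ) (hb : 1 < b) (w : List (Fin b)) :
    occCount w (List.ofFn (digFun b m hb))
      = occCount (w.map Fin.val) (Nat.digits b m).reverse := by
  rw [← occCount_map Fin.val Fin.val_injective w (List.ofFn (digFun b m hb)), digFun_map]

/-- `S_w(k)` is finite, and bounded above by `b · Z_w(k)(1/b)`. -/
theorem stmt3 (b : ℕ) (hb : 1 < b) (w : List (Fin b)) (hw : 1 ≤ w.length) (k : ℕ) :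
    (Summable fun m : ℕ => Sterm b w k m) ∧
    ∑' m : ℕ, Sterm b w k m ≤ (b : ℝ) * ∑' l : ℕ, (Nw b w k l : ℝ) * ((b : ℝ)⁻¹) ^ l := by
  classical
  have hb0 : (0 : ℝ) < (b : ℝ) := by
    have : (1 : ℝ) < (b : ℝ) := by exact_mod_cast hb
    linarith
  -- summability of the length series
  have hbp : 1 < b ^ w.length := Nat.one_lt_pow (by omega) hb
  have hr0 : 0 < ((b ^ w.length - 1 : ℕ) : ℝ) / (b : ℝ) ^ w.length := by
    apply div_pos
    · exact_mod_cast Nat.sub_pos_of_lt hbp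
    · positivity
  have hr1 : ((b ^ w.length - 1 : ℕ) : ℝ) / (b : ℝ) ^ w.length < 1 := by
    rw [div_lt_one (by positivity)]
    calc ((b ^ w.length - 1 : ℕ) : ℝ) < ((b ^ w.length : ℕ) : ℝ) := by
          exact_mod_cast Nat.sub_lt (by omega) one_pos
      _ = (b : ℝ) ^ w.length := by push_cast; ring
  have hcs : Summable (fun l : ℕ => (Nw b w k l : ℝ) * ((b : ℝ)⁻¹) ^ l) :=
    Summable.of_nonneg_of_le (fun l => by positivity) (fun l => term_bound b hb w hw k l)
      (summable_aux w.length k hw _ hr0 hr1)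
  -- the sigma-type setup
  let I := Σ l : ℕ, {f : Fin l → Fin b // occCount w (List.ofFn f) = k}
  let G : I → ℝ := fun x => (b : ℝ) * ((b : ℝ)⁻¹) ^ x.1
  have hG0 : ∀ x : I, 0 ≤ G x := fun x => by positivity
  have hfib : ∀ l : ℕ, ∑' f : {f : Fin l → Fin b // occCount w (List.ofFn f) = k},
      G ⟨l, f⟩ = (Nw b w k l : ℝ) * ((b : ℝ) * ((b : ℝ)⁻¹) ^ l) := by
    intro l
    rw [tsum_fintype]
    simp only [G]
    rw [Finset.sum_const, Finset.card_univ, nsmul_eq_mul]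
    congr 2
  have hsum2 : Summable (fun l : ℕ => (Nw b w k l : ℝ) * ((b : ℝ) * ((b : ℝ)⁻¹) ^ l)) := by
    apply Summable.congr (hcs.mul_left (b : ℝ))
    intro l
    ring
  have hGs : Summable G := by
    apply (summable_sigma_of_nonneg hG0).mpr
    exact ⟨fun l => (hasSum_fintype _).summable, Summable.congr hsum2 (fun l => (hfib l).symm)⟩
  have htsum : ∑' x : I, G x
      = (b : ℝ) * ∑' l : ℕ, (Nw b w k l : ℝ) * ((b : ℝ)⁻¹) ^ l := by
    rw [hGs.tsum_sigma, tsum_congr hfib, ← tsum_mul_left]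
    apply tsum_congr
    intro l
    ring
  -- nonnegativity of the terms
  have hSterm0 : ∀ m, 0 ≤ Sterm b w k m := by
    intro m
    unfold Sterm
    split <;> positivity
  -- bounding partial sums
  have key : ∀ n : ℕ, ∑ m ∈ Finset.range n, Sterm b w k m ≤ ∑' x : I, G x := by
    intro n
    set F := (Finset.range n).filter
      (fun m => m ≠ 0 ∧ occCount (w.map Fin.val) (Nat.digits b m).reverse = k) with hF
    have hsplit : ∑ m ∈ Finset.range n, Sterm b w k m = ∑ m ∈ F, Sterm b w k m := by
      rw [hF]
      refine (Finset.sum_filter_of_ne ?_).symm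
      intro m _ hm
      by_contra hc
      apply hm
      unfold Sterm
      rw [if_neg hc]
    rw [hsplit]
    let ι : {m // m ∈ F} → I := fun x =>
      ⟨(Nat.digits b x.1).length, ⟨digFun b x.1 hb, by
        rw [digFun_occ]
        exact (Finset.mem_filter.mp x.2).2.2⟩⟩
    let μ : I → ℕ := fun z => Nat.ofDigits b (((List.ofFn z.2.1).map Fin.val).reverse)
    have hrec : ∀ x, μ (ι x) = x.1 := by
      intro x
      simp only [ι, μ]
      rw [digFun_map, List.reverse_reverse, Nat.ofDigits_digits]
    have hinj : ∀ x ∈ F.attach, ∀ y ∈ F.attach, ι x = ι y → x = y := by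
      intro x _ y _ hxy
      apply Subtype.ext
      rw [← hrec x, ← hrec y, hxy]
    have hbnd : ∀ x : {m // m ∈ F}, Sterm b w k x.1 ≤ G (ι x) := by
      intro x
      obtain ⟨-, hm0, hocc⟩ : x.1 ∈ Finset.range n ∧ x.1 ≠ 0 ∧
          occCount (w.map Fin.val) (Nat.digits b x.1).reverse = k :=
        Finset.mem_filter.mp x.2
      have hSx : Sterm b w k x.1 = ((x.1 : ℕ) : ℝ)⁻¹ := by
        unfold Sterm
        rw [if_pos ⟨hm0, hocc⟩]
      have hGx : G (ι x) = (b : ℝ) * ((b : ℝ)⁻¹) ^ (Nat.digits b x.1).length := rfl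
      rw [hSx, hGx]
      have hnat : b ^ (Nat.digits b x.1).length ≤ b * x.1 :=
        Nat.base_pow_length_digits_le b x.1 hb hm0
      have hx0 : (0 : ℝ) < ((x.1 : ℕ) : ℝ) := by
        exact_mod_cast Nat.pos_of_ne_zero hm0
      rw [inv_pow, ← one_div, ← div_eq_mul_inv,
        div_le_div_iff₀ hx0 (by positivity), one_mul]
      calc (b : ℝ) ^ (Nat.digits b x.1).length = ((b ^ (Nat.digits b x.1).length : ℕ) : ℝ) := by
            push_cast; ring
        _ ≤ ((b * x.1 : ℕ) : ℝ) := by exact_mod_cast hnat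
        _ = (b : ℝ) * ((x.1 : ℕ) : ℝ) := by push_cast; ring
    calc ∑ m ∈ F, Sterm b w k m = ∑ x ∈ F.attach, Sterm b w k x.1 :=
          (Finset.sum_attach _ _).symm
      _ ≤ ∑ x ∈ F.attach, G (ι x) := Finset.sum_le_sum (fun x _ => hbnd x)
      _ = ∑ y ∈ F.attach.image ι, G y := (Finset.sum_image hinj).symm
      _ ≤ ∑' x : I, G x := hGs.sum_le_tsum _ (fun _ _ => hG0 _)
  have key2 : ∀ n : ℕ, ∑ m ∈ Finset.range n, Sterm b w k m
      ≤ (b : ℝ) * ∑' l : ℕ, (Nw b w k l : ℝ) * ((b : ℝ)⁻¹) ^ l :=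
    fun n => (key n).trans_eq htsum
  have hsummable : Summable fun m : ℕ => Sterm b w k m :=
    summable_of_sum_range_le hSterm0 key2
  exact ⟨hsummable, hsummable.tsum_le_of_sum_range_le key2⟩
end

section
/- For all k ≥ 0, Z_w(v,k)(t) = (t^{2-p} Z_w(v,0,u)(t))^k · Z_w(v,0)(t) as formal power series, where v is the (p-1)-suffix and u the (p-1)-prefix of w. -/
open scoped BigOperators
open PowerSeries

/-- Number of strings of length `l` over `{0,…,b-1}` with exactly `k` occurrences of `w`,
starting with `x` and ending with `y` (an empty `x` or `y` imposes no constraint). -/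
def Nxy (b : ℕ) (w x y : List (Fin b)) (k l : ℕ) : ℕ :=
  Fintype.card {f : Fin l → Fin b //
    occCount w (List.ofFn f) = k ∧ x <+: List.ofFn f ∧ y <:+ List.ofFn f}

/-- The generating series `Z_w(x,k,y)(t)` as a formal power series over `ℚ`. -/
noncomputable def Zser (b : ℕ) (w x y : List (Fin b)) (k : ℕ) : PowerSeries ℚ :=
  PowerSeries.mk fun l => (Nxy b w x y k l : ℚ)


section OccAux
variable {b : ℕ} {w : List (Fin b)}

lemma occ_len (hw : 1 ≤ w.length) {X : List (Fin b)} {i : ℕ}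
    (h : (X.drop i).take w.length = w) : i + w.length ≤ X.length := by
  have h1 := congrArg List.length h
  simp only [List.length_take, List.length_drop] at h1
  omega

lemma occCount_eq_zero_iff (hw : 1 ≤ w.length) {X : List (Fin b)} :
    occCount w X = 0 ↔ ∀ j, ¬ (X.drop j).take w.length = w := by
  rw [occCount, List.length_eq_zero_iff, List.filter_eq_nil_iff]
  constructor
  · intro h j hj
    have := h j (List.mem_range.mpr (by have := occ_len hw hj; omega))
    simp [hj] at this
  · intro h i _
    simpa using h i

lemma occCount_cons (a : Fin b) (X : List (Fin b)) :
    occCount w (a :: X) = (if (a :: X).take w.length = w then 1 else 0) + occCount w X := by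
  rw [occCount, List.length_cons, List.range_succ_eq_map, List.filter_cons, List.filter_map]
  by_cases h : (a :: X).take w.length = w <;>
    simp [h, occCount, Function.comp_def] <;> omega

lemma occCount_drop (hw : 1 ≤ w.length) :
    ∀ (s : ℕ) (X : List (Fin b)), (∀ j, j < s → ¬ (X.drop j).take w.length = w) →
      occCount w (X.drop s) = occCount w X := by
  intro s
  induction s with
  | zero => simp
  | succ s ih =>
    intro X h
    match X with
    | [] => simp
    | a :: X =>
      have h0 : ¬ (a :: X).take w.length = w := by simpa using h 0 (by omega)
      have e : occCount w (a :: X) = occCount w X := by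
        rw [occCount_cons]; simp [h0]
      rw [List.drop_succ_cons, e]
      exact ih X (fun j hj => by simpa using h (j+1) (by omega))

lemma occCount_first (hw : 1 ≤ w.length) {X : List (Fin b)} {i : ℕ}
    (hmin : ∀ j, j < i → ¬ (X.drop j).take w.length = w)
    (hi : (X.drop i).take w.length = w) :
    occCount w X = 1 + occCount w (X.drop (i+1)) := by
  rw [← occCount_drop hw i X hmin]
  match hd : X.drop i with
  | [] =>
    rw [hd] at hi
    replace hi := congrArg List.length hi
    simp [List.length_take] at hi
    omega
  | a :: t =>
    have ht : t = X.drop (i+1) := by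
      have := congrArg (List.drop 1) hd
      rw [List.drop_drop] at this
      simpa using this.symm
    rw [hd] at hi
    rw [occCount_cons, if_pos hi, ht]

lemma occ_take {X : List (Fin b)} {j t : ℕ} (h : j + w.length ≤ t) :
    ((X.take t).drop j).take w.length = (X.drop j).take w.length := by
  rw [List.drop_take, List.take_take, inf_eq_left.mpr (by omega)]

end OccAux

section Bij
variable {b : ℕ} {w : List (Fin b)}

open Classical in
/-- index of the first occurrence of `w` (0 if none). -/
noncomputable def idx (w X : List (Fin b)) : ℕ :=
  if h : ∃ i, (X.drop i).take w.length = w then Nat.find h else 0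

lemma idx_spec {X : List (Fin b)} (h : ∃ i, (X.drop i).take w.length = w) :
    (X.drop (idx w X)).take w.length = w ∧
      ∀ j, j < idx w X → ¬ (X.drop j).take w.length = w := by
  rw [idx, dif_pos h]
  exact ⟨Nat.find_spec h, fun j hj => Nat.find_min h hj⟩

lemma exists_occ (hw : 1 ≤ w.length) {X : List (Fin b)} {k : ℕ}
    (h : occCount w X = k + 1) : ∃ i, (X.drop i).take w.length = w := by
  by_contra hc
  push_neg at hc
  have := (occCount_eq_zero_iff hw).mpr hc
  omega

/-- gluing a `(Y, Z)` pair back into a single string. -/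
def glue (w Y Z : List (Fin b)) : List (Fin b) :=
  Y.take (Y.length - (w.length - 1)) ++ (w ++ Z.drop (w.length - 1))

lemma fwd_facts (hw : 1 ≤ w.length) {X : List (Fin b)} {k : ℕ}
    (hocc : occCount w X = k + 1) (hv : w.drop 1 <+: X) :
    (X.take (idx w X + w.length - 1)).length + (X.drop (idx w X + 1)).length + 2
        = X.length + w.length ∧
    occCount w (X.take (idx w X + w.length - 1)) = 0 ∧
    w.drop 1 <+: X.take (idx w X + w.length - 1) ∧
    w.take (w.length - 1) <:+ X.take (idx w X + w.length - 1) ∧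
    occCount w (X.drop (idx w X + 1)) = k ∧
    w.drop 1 <+: X.drop (idx w X + 1) ∧
    glue w (X.take (idx w X + w.length - 1)) (X.drop (idx w X + 1)) = X := by
  obtain ⟨hspec, hmin⟩ := idx_spec (exists_occ hw hocc)
  set i := idx w X with hidef
  have hip : i + w.length ≤ X.length := occ_len hw hspec
  have hYlen : (X.take (i + w.length - 1)).length = i + w.length - 1 := by
    rw [List.length_take]; omega
  refine ⟨?_, ?_, ?_, ?_, ?_, ?_, ?_⟩
  · simp only [List.length_take, List.length_drop]; omega
  · rw [occCount_eq_zero_iff hw]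
    intro j hj
    have hjl := occ_len hw hj
    rw [hYlen] at hjl
    rw [occ_take hjl] at hj
    exact hmin j (by omega) hj
  · rw [List.prefix_iff_eq_take] at hv ⊢
    rw [List.take_take, List.length_drop]
    have t1 : (w.length - 1) ⊓ (i + w.length - 1) = w.length - 1 :=
      inf_eq_left.mpr (by omega)
    rw [t1]
    rw [List.length_drop] at hv
    exact hv
  · rw [List.suffix_iff_eq_drop]
    have e1 : (X.take (i + w.length - 1)).length - (w.take (w.length - 1)).length = i := by
      rw [hYlen, List.length_take]; omega
    rw [e1, List.drop_take]
    have e2 : i + w.length - 1 - i = w.length - 1 := by omega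
    rw [e2]
    have e3 := congrArg (List.take (w.length - 1)) hspec
    rw [List.take_take] at e3
    have t2 : (w.length - 1) ⊓ w.length = w.length - 1 := inf_eq_left.mpr (by omega)
    rw [t2] at e3
    exact e3.symm
  · have := occCount_first hw hmin hspec
    omega
  · rw [List.prefix_iff_eq_take]
    have e4 := congrArg (List.drop 1) hspec
    rw [List.drop_take, List.drop_drop] at e4
    rw [List.length_drop]
    exact e4.symm
  · simp only [glue]
    have e0 : (X.take (i + w.length - 1)).length - (w.length - 1) = i := by
      rw [hYlen]; omega
    rw [e0, List.take_take]
    have t3 : i ⊓ (i + w.length - 1) = i := inf_eq_left.mpr (by omega)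
    rw [t3]
    have e6 : (X.drop (i + 1)).drop (w.length - 1) = X.drop (i + w.length) := by
      rw [List.drop_drop]; congr 1; omega
    rw [e6]
    have e5 : X.drop i = w ++ X.drop (i + w.length) := by
      conv_lhs => rw [← List.take_append_drop w.length (X.drop i)]
      rw [hspec, List.drop_drop]
    rw [← e5, List.take_append_drop]

lemma back_facts (hw : 1 ≤ w.length) {Y Z : List (Fin b)}
    (hY0 : occCount w Y = 0) (hYu : w.take (w.length - 1) <:+ Y)
    (hZv : w.drop 1 <+: Z) :
    (glue w Y Z).length + w.length = Y.length + Z.length + 2 ∧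
    (glue w Y Z).take (Y.length - (w.length - 1) + w.length - 1) = Y ∧
    (glue w Y Z).drop (Y.length - (w.length - 1) + 1) = Z ∧
    ((glue w Y Z).drop (Y.length - (w.length - 1))).take w.length = w ∧
    (∀ j, j < Y.length - (w.length - 1) → ¬ ((glue w Y Z).drop j).take w.length = w) ∧
    occCount w (glue w Y Z) = 1 + occCount w Z ∧
    Y <+: glue w Y Z := by
  have hap : w.length - 1 ≤ Y.length := by
    have := hYu.length_le; rw [List.length_take] at this; omega
  have hcp : w.length - 1 ≤ Z.length := by
    have := hZv.length_le; rw [List.length_drop] at this; omega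
  set i := Y.length - (w.length - 1) with hidef
  have hYdrop : Y.drop i = w.take (w.length - 1) := by
    have e := List.suffix_iff_eq_drop.mp hYu
    have e' : Y.length - (w.take (w.length - 1)).length = i := by
      rw [List.length_take]; omega
    rw [e'] at e
    exact e.symm
  have hZtake : Z.take (w.length - 1) = w.drop 1 := by
    have e := List.prefix_iff_eq_take.mp hZv
    rw [List.length_drop] at e
    exact e.symm
  have hti : (Y.take i).length = i := by rw [List.length_take]; omega
  have h4 : (glue w Y Z).drop i = w ++ Z.drop (w.length - 1) := by
    simp only [glue]; rw [← hidef]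
    exact List.drop_left' hti
  have g4 : ((glue w Y Z).drop i).take w.length = w := by
    rw [h4]; exact List.take_left
  have g2 : (glue w Y Z).take (i + w.length - 1) = Y := by
    simp only [glue]; rw [← hidef]
    rw [List.take_append, List.take_take]
    have t1 : (i + w.length - 1) ⊓ i = i := inf_eq_right.mpr (by omega)
    rw [t1, hti]
    have t2 : i + w.length - 1 - i = w.length - 1 := by omega
    rw [t2, List.take_append_of_le_length (by omega : w.length - 1 ≤ w.length),
      ← hYdrop, List.take_append_drop]
  have g3 : (glue w Y Z).drop (i + 1) = Z := by
    have e : (glue w Y Z).drop (i + 1) = ((glue w Y Z).drop i).drop 1 :=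
      List.drop_drop.symm
    rw [e, h4, List.drop_append_of_le_length hw, ← hZtake, List.take_append_drop]
  have g5 : ∀ j, j < i → ¬ ((glue w Y Z).drop j).take w.length = w := by
    intro j hj hocc
    have hj2 : j + w.length ≤ i + w.length - 1 := by omega
    have h2' : (((glue w Y Z).take (i + w.length - 1)).drop j).take w.length = w := by
      rw [occ_take hj2]; exact hocc
    rw [g2] at h2'
    exact (occCount_eq_zero_iff hw).mp hY0 j h2'
  have g6 : occCount w (glue w Y Z) = 1 + occCount w Z := by
    rw [occCount_first hw g5 g4, g3]
  have g1 : (glue w Y Z).length + w.length = Y.length + Z.length + 2 := by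
    simp only [glue]
    rw [List.length_append, List.length_append, hti, List.length_drop]
    omega
  have g7 : Y <+: glue w Y Z := by
    conv_lhs => rw [← List.take_append_drop i Y, hYdrop]
    simp only [glue]; rw [← hidef]
    exact (List.prefix_append_right_inj _).mpr
      ((List.take_prefix _ _).trans (List.prefix_append _ _))
  exact ⟨g1, g2, g3, g4, g5, g6, g7⟩

end Bij


section CardAux
variable {b : ℕ}
variable {b : ℕ}

def fnListEquiv (b l : ℕ) (P : List (Fin b) → Prop) :
    {f : Fin l → Fin b // P (List.ofFn f)} ≃ {X : List (Fin b) // X.length = l ∧ P X} where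
  toFun f := ⟨List.ofFn f.1, by simp, f.2⟩
  invFun X := ⟨fun i => X.1.get (Fin.cast X.2.1.symm i), by
    obtain ⟨X, hl, hP⟩ := X
    subst hl
    simpa [Fin.cast, List.ofFn_get] using hP⟩
  left_inv f := by ext i; simp
  right_inv X := by
    obtain ⟨X, hl, hP⟩ := X
    subst hl
    simp [Fin.cast, List.ofFn_get]

instance listSubtypeFinite (l : ℕ) (P : List (Fin b) → Prop) :
    Finite {X : List (Fin b) // X.length = l ∧ P X} :=
  Finite.of_equiv _ (fnListEquiv b l P)

lemma Nxy_eq (w x y : List (Fin b)) (k l : ℕ) :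
    Nxy b w x y k l =
      Nat.card {X : List (Fin b) // X.length = l ∧
        (occCount w X = k ∧ x <+: X ∧ y <:+ X)} := by
  rw [Nxy, ← Nat.card_eq_fintype_card]
  exact Nat.card_congr
    (fnListEquiv b l (fun X => occCount w X = k ∧ x <+: X ∧ y <:+ X))

lemma card_pairs (m : ℕ) (P Q : List (Fin b) → Prop) :
    Nat.card {YZ : List (Fin b) × List (Fin b) //
        YZ.1.length + YZ.2.length = m ∧ P YZ.1 ∧ Q YZ.2} =
      ∑ x ∈ Finset.HasAntidiagonal.antidiagonal m,
        Nat.card {Y : List (Fin b) // Y.length = x.1 ∧ P Y} *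
          Nat.card {Z : List (Fin b) // Z.length = x.2 ∧ Q Z} := by
  have e : {YZ : List (Fin b) × List (Fin b) //
        YZ.1.length + YZ.2.length = m ∧ P YZ.1 ∧ Q YZ.2} ≃
      Σ x : Finset.HasAntidiagonal.antidiagonal m,
        {Y : List (Fin b) // Y.length = (x : ℕ × ℕ).1 ∧ P Y} ×
          {Z : List (Fin b) // Z.length = (x : ℕ × ℕ).2 ∧ Q Z} :=
    { toFun := fun s => ⟨⟨(s.1.1.length, s.1.2.length),
        Finset.HasAntidiagonal.mem_antidiagonal.mpr s.2.1⟩,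
        ⟨s.1.1, rfl, s.2.2.1⟩, ⟨s.1.2, rfl, s.2.2.2⟩⟩
      invFun := fun t => ⟨(t.2.1.1, t.2.2.1), by
        obtain ⟨⟨⟨a, c⟩, hx⟩, ⟨Y, hY, hPY⟩, ⟨Z, hZ, hQZ⟩⟩ := t
        refine ⟨?_, hPY, hQZ⟩
        simp only [hY, hZ]
        exact Finset.HasAntidiagonal.mem_antidiagonal.mp hx⟩
      left_inv := fun s => by
        obtain ⟨⟨Y, Z⟩, h⟩ := s; rfl
      right_inv := fun t => by
        obtain ⟨⟨⟨a, c⟩, hx⟩, yz⟩ := t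
        obtain ⟨⟨Y, hY, hPY⟩, ⟨Z, hZ, hQZ⟩⟩ := yz
        dsimp only at hY hZ
        subst hY; subst hZ; rfl }
  rw [Nat.card_congr e]
  haveI : ∀ x : Finset.HasAntidiagonal.antidiagonal m, Fintype
      ({Y : List (Fin b) // Y.length = (x : ℕ × ℕ).1 ∧ P Y} ×
        {Z : List (Fin b) // Z.length = (x : ℕ × ℕ).2 ∧ Q Z}) := fun x =>
    Fintype.ofFinite _
  rw [Nat.card_eq_fintype_card, Fintype.card_sigma,
    ← Finset.sum_coe_sort (Finset.HasAntidiagonal.antidiagonal m)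
      (fun x => Nat.card {Y : List (Fin b) // Y.length = x.1 ∧ P Y} *
        Nat.card {Z : List (Fin b) // Z.length = x.2 ∧ Q Z})]
  apply Finset.sum_congr rfl
  intro x _
  rw [← Nat.card_eq_fintype_card, Nat.card_prod]

end CardAux

section Key
variable {b : ℕ} {w : List (Fin b)}

lemma key_card (hw : 1 ≤ w.length) (k L m : ℕ) (hm : m + 2 = L + w.length) :
    Nat.card {X : List (Fin b) // X.length = L ∧
        (occCount w X = k + 1 ∧ w.drop 1 <+: X ∧ [] <:+ X)} =
      Nat.card {YZ : List (Fin b) × List (Fin b) //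
        YZ.1.length + YZ.2.length = m ∧
        (occCount w YZ.1 = 0 ∧ w.drop 1 <+: YZ.1 ∧ w.take (w.length - 1) <:+ YZ.1) ∧
        (occCount w YZ.2 = k ∧ w.drop 1 <+: YZ.2 ∧ [] <:+ YZ.2)} := by
  apply Nat.card_congr
  exact
    { toFun := fun s =>
        ⟨(s.1.take (idx w s.1 + w.length - 1), s.1.drop (idx w s.1 + 1)), by
          obtain ⟨X, hlen, hocc, hv, -⟩ := s
          dsimp only
          obtain ⟨f1, f2, f3, f4, f5, f6, f7⟩ := fwd_facts hw hocc hv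
          exact ⟨by omega, ⟨f2, f3, f4⟩, ⟨f5, f6, List.nil_suffix⟩⟩⟩
      invFun := fun t =>
        ⟨glue w t.1.1 t.1.2, by
          obtain ⟨⟨Y, Z⟩, hlen, ⟨hY0, hYv, hYu⟩, hZk, hZv, -⟩ := t
          dsimp only at hlen hY0 hYv hYu hZk hZv ⊢
          obtain ⟨g1, g2, g3, g4, g5, g6, g7⟩ := back_facts hw hY0 hYu hZv
          exact ⟨by omega, by omega, hYv.trans g7, List.nil_suffix⟩⟩
      left_inv := fun s => by
        obtain ⟨X, hlen, hocc, hv, -⟩ := s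
        obtain ⟨f1, f2, f3, f4, f5, f6, f7⟩ := fwd_facts hw hocc hv
        exact Subtype.ext f7
      right_inv := fun t => by
        obtain ⟨⟨Y, Z⟩, hlen, ⟨hY0, hYv, hYu⟩, hZk, hZv, -⟩ := t
        obtain ⟨g1, g2, g3, g4, g5, g6, g7⟩ := back_facts hw hY0 hYu hZv
        have hidx : idx w (glue w Y Z) = Y.length - (w.length - 1) := by
          obtain ⟨hs, hmn⟩ := idx_spec ⟨_, g4⟩
          by_contra hne
          rcases Nat.lt_or_ge (idx w (glue w Y Z)) (Y.length - (w.length - 1)) with h | h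
          · exact g5 _ h hs
          · exact hmn _ (lt_of_le_of_ne h (Ne.symm hne)) g4
        apply Subtype.ext
        dsimp only
        rw [hidx]
        exact Prod.ext g2 g3 }

lemma Nxy_len_zero (hw : 1 ≤ w.length) (k : ℕ) (x y : List (Fin b)) :
    Nxy b w x y (k + 1) 0 = 0 := by
  refine Fintype.card_eq_zero_iff.mpr ⟨fun s => ?_⟩
  obtain ⟨f, hf, -⟩ := s
  have h0 : List.ofFn f = [] := List.length_eq_zero_iff.mp (by simp)
  rw [h0] at hf
  simp [occCount] at hf

lemma Nxy_small {l : ℕ} (h : l + 1 < w.length) :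
    Nxy b w (w.drop 1) (w.take (w.length - 1)) 0 l = 0 := by
  refine Fintype.card_eq_zero_iff.mpr ⟨fun s => ?_⟩
  obtain ⟨f, -, hpre, -⟩ := s
  have := hpre.length_le
  simp only [List.length_drop, List.length_ofFn] at this
  omega

lemma coeff_X_pow_mul'' (f : PowerSeries ℚ) (p n : ℕ) :
    (PowerSeries.coeff n) (X ^ p * f) =
      if p ≤ n then PowerSeries.coeff (n - p) f else 0 := by
  rw [mul_comm, PowerSeries.coeff_mul_X_pow']

lemma main_step (hw : 1 ≤ w.length) (k : ℕ) :
    (X : PowerSeries ℚ) ^ w.length * Zser b w (w.drop 1) [] (k + 1) =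
      X ^ 2 * (Zser b w (w.drop 1) (w.take (w.length - 1)) 0 *
        Zser b w (w.drop 1) [] k) := by
  ext n
  rw [coeff_X_pow_mul'', coeff_X_pow_mul'']
  by_cases h2 : 2 ≤ n
  · by_cases hp : w.length ≤ n
    · rw [if_pos h2, if_pos hp, PowerSeries.coeff_mul]
      simp only [Zser, PowerSeries.coeff_mk]
      have keyN : Nxy b w (w.drop 1) [] (k + 1) (n - w.length) =
          ∑ x ∈ Finset.HasAntidiagonal.antidiagonal (n - 2),
            Nxy b w (w.drop 1) (w.take (w.length - 1)) 0 x.1 *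
              Nxy b w (w.drop 1) [] k x.2 := by
        rw [Nxy_eq, key_card hw k (n - w.length) (n - 2) (by omega),
          card_pairs (n - 2)
            (fun Y => occCount w Y = 0 ∧ w.drop 1 <+: Y ∧ w.take (w.length - 1) <:+ Y)
            (fun Z => occCount w Z = k ∧ w.drop 1 <+: Z ∧ [] <:+ Z)]
        apply Finset.sum_congr rfl
        intro x _
        rw [Nxy_eq, Nxy_eq]
      rw [keyN]
      push_cast
      rfl
    · rw [if_neg hp, if_pos h2, PowerSeries.coeff_mul]
      symm
      apply Finset.sum_eq_zero
      intro x hx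
      have hx1 : x.1 + x.2 = n - 2 := Finset.HasAntidiagonal.mem_antidiagonal.mp hx
      have h0 : Nxy b w (w.drop 1) (w.take (w.length - 1)) 0 x.1 = 0 :=
        Nxy_small (by omega)
      simp only [Zser, PowerSeries.coeff_mk]
      rw [h0]
      simp
  · rw [if_neg h2]
    by_cases hp : w.length ≤ n
    · rw [if_pos hp]
      have h0 : n - w.length = 0 := by omega
      rw [h0]
      simp [Zser, PowerSeries.coeff_mk, Nxy_len_zero hw]
    · rw [if_neg hp]

end Key


/-- `Z_w(v,k) = (t^{2-p} Z_w(v,0,u))^k Z_w(v,0)` (stated multiplied through by `t^{pk}`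
to avoid negative exponents): `t^{pk} Z_w(v,k) = (t^2 Z_w(v,0,u))^k Z_w(v,0)`. -/
theorem stmt5 (b : ℕ) (hb : 1 < b) (w : List (Fin b)) (hw : 1 ≤ w.length) (k : ℕ) :
    (X : PowerSeries ℚ) ^ (w.length * k) * Zser b w (w.drop 1) [] k =
      (X ^ 2 * Zser b w (w.drop 1) (w.take (w.length - 1)) 0) ^ k *
        Zser b w (w.drop 1) [] 0 := by
  induction k with
  | zero => simp
  | succ k ih =>
    calc (X : PowerSeries ℚ) ^ (w.length * (k + 1)) * Zser b w (w.drop 1) [] (k + 1)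
        = X ^ (w.length * k) * (X ^ w.length * Zser b w (w.drop 1) [] (k + 1)) := by
          rw [← mul_assoc, ← pow_add, Nat.mul_succ]
      _ = X ^ (w.length * k) * (X ^ 2 * (Zser b w (w.drop 1) (w.take (w.length - 1)) 0 *
            Zser b w (w.drop 1) [] k)) := by rw [main_step hw k]
      _ = (X ^ 2 * Zser b w (w.drop 1) (w.take (w.length - 1)) 0) *
            (X ^ (w.length * k) * Zser b w (w.drop 1) [] k) := by ring
      _ = (X ^ 2 * Zser b w (w.drop 1) (w.take (w.length - 1)) 0) *
            ((X ^ 2 * Zser b w (w.drop 1) (w.take (w.length - 1)) 0) ^ k *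
              Zser b w (w.drop 1) [] 0) := by rw [ih]
      _ = (X ^ 2 * Zser b w (w.drop 1) (w.take (w.length - 1)) 0) ^ (k + 1) *
            Zser b w (w.drop 1) [] 0 := by ring
end

section
/- The total mass M_w(v,k) = Z_w(v,k)(1/b) of k-admissible strings starting with the (p-1)-suffix v of w is independent of k ≥ 0, and equals b. -/
open scoped BigOperators
open PowerSeries

open Filter Topology

namespace Aux
variable {α : Type*} [DecidableEq α]

lemma occ_countP (w X : List α) :
    occCount w X = (List.range X.length).countP fun i => decide ((X.drop i).take w.length = w) := by
  rw [occCount, List.countP_eq_length_filter]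

lemma occ_nil (w : List α) : occCount w [] = 0 := rfl

lemma occ_cons (w : List α) (a : α) (X : List α) :
    occCount w (a :: X) = (if (a :: X).take w.length = w then 1 else 0) + occCount w X := by
  rw [occ_countP, occ_countP]
  simp only [List.length_cons, List.range_succ_eq_map, List.countP_cons, List.countP_map]
  have h1 : ∀ i : ℕ, ((a :: X).drop (Nat.succ i)) = X.drop i := fun i => rfl
  simp only [Function.comp_def, h1, List.drop_zero]
  rw [Nat.add_comm]
  congr 1
  · simp

lemma occ_le_append (w X Y : List α) : occCount w X ≤ occCount w (X ++ Y) := by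
  rw [occ_countP, occ_countP, List.length_append, List.range_add]
  rw [List.countP_append]
  refine le_trans (List.countP_mono_left ?_) (Nat.le_add_right _ _)
  intro i hi h
  simp only [List.mem_range] at hi
  simp only [decide_eq_true_iff] at h ⊢
  have hd : (X ++ Y).drop i = X.drop i ++ Y := List.drop_append_of_le_length (le_of_lt hi)
  rw [hd]
  have hlen : w.length ≤ (X.drop i).length := by
    have := congrArg List.length h
    simp only [List.length_take] at this
    omega
  rw [List.take_append_of_le_length hlen, h]

lemma occ_append_w (w X : List α) (hw : w ≠ []) : occCount w X + 1 ≤ occCount w (X ++ w) := by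
  rw [occ_countP (w := w) (X := X ++ w), List.length_append, List.range_add, List.countP_append]
  have h1 : occCount w X ≤ (List.range X.length).countP
      fun i => decide (((X ++ w).drop i).take w.length = w) := by
    rw [occ_countP]
    refine List.countP_mono_left ?_
    intro i hi h
    simp only [List.mem_range] at hi
    simp only [decide_eq_true_iff] at h ⊢
    rw [List.drop_append_of_le_length (le_of_lt hi)]
    have hlen : w.length ≤ (X.drop i).length := by
      have := congrArg List.length h
      simp only [List.length_take] at this
      omega
    rw [List.take_append_of_le_length hlen, h]
  have h2 : 1 ≤ (List.map (fun x => X.length + x) (List.range w.length)).countP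
      fun i => decide (((X ++ w).drop i).take w.length = w) := by
    rw [Nat.one_le_iff_ne_zero, ← Nat.pos_iff_ne_zero, List.countP_pos_iff]
    refine ⟨X.length, ?_, ?_⟩
    · simp only [List.mem_map, List.mem_range]
      exact ⟨0, by simpa using List.length_pos_of_ne_nil hw, by simp⟩
    · simp only [decide_eq_true_iff]
      rw [List.drop_left, List.take_length]
  omega

end Aux

def Acnt (b : ℕ) (w : List (Fin b)) (k l : ℕ) : ℕ :=
  Fintype.card {f : Fin l → Fin b // occCount w (List.ofFn f) ≤ k}

namespace Aux

lemma Acnt_zero (b : ℕ) (w : List (Fin b)) (k : ℕ) : Acnt b w k 0 = 1 := by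
  rw [Acnt]
  have : ∀ f : Fin 0 → Fin b, occCount w (List.ofFn f) ≤ k := by
    intro f
    simp [List.ofFn_zero, occ_nil]
  rw [Fintype.card_eq_one_iff]
  exact ⟨⟨finZeroElim, this _⟩, fun g => Subtype.ext (funext fun i => i.elim0)⟩

lemma occ_ofFn_succ (b l : ℕ) (w : List (Fin b)) (f : Fin (l+1) → Fin b) :
    occCount w (List.ofFn f) =
      (if (List.ofFn f).take w.length = w then 1 else 0) + occCount w (List.ofFn (Fin.tail f)) := by
  rw [List.ofFn_succ, occ_cons]
  rfl

lemma take_w_iff (b l : ℕ) (w0 : Fin b) (v : List (Fin b)) (f : Fin (l+1) → Fin b) :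
    (List.ofFn f).take (w0 :: v).length = w0 :: v ↔
      f 0 = w0 ∧ v <+: List.ofFn (Fin.tail f) := by
  rw [List.ofFn_succ, List.length_cons, List.take_succ_cons, List.prefix_iff_eq_take]
  constructor
  · intro h
    injection h with h1 h2
    exact ⟨h1, h2.symm⟩
  · rintro ⟨h1, h2⟩
    rw [h1]
    exact congrArg (List.cons w0) h2.symm

lemma key (b : ℕ) (w0 : Fin b) (v : List (Fin b)) (k l : ℕ) :
    Acnt b (w0::v) k (l+1) + Nxy b (w0::v) v [] k l = b * Acnt b (w0::v) k l := by
  set w := w0 :: v with hwdef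
  -- step a
  have ha : Fintype.card {f : Fin (l+1) → Fin b // occCount w (List.ofFn (Fin.tail f)) ≤ k}
      = b * Acnt b w k l := by
    have e : {f : Fin (l+1) → Fin b // occCount w (List.ofFn (Fin.tail f)) ≤ k}
        ≃ Fin b × {g : Fin l → Fin b // occCount w (List.ofFn g) ≤ k} :=
      { toFun := fun f => (f.1 0, ⟨Fin.tail f.1, f.2⟩)
        invFun := fun x => ⟨Fin.cons x.1 x.2.1, by
          simpa [Fin.tail_cons] using x.2.2⟩
        left_inv := fun f => Subtype.ext (Fin.cons_self_tail f.1)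
        right_inv := fun x => by
          ext <;> simp [Fin.tail_cons] }
    rw [Fintype.card_congr e, Fintype.card_prod, Fintype.card_fin, Acnt]
  -- step b
  have hdisj : Disjoint (fun f : Fin (l+1) → Fin b => occCount w (List.ofFn f) ≤ k)
      (fun f => (List.ofFn f).take w.length = w ∧ occCount w (List.ofFn (Fin.tail f)) = k) := by
    intro p hp1 hp2 f hf
    have h1 := hp1 f hf
    have h2 := hp2 f hf
    simp only at h1 h2
    exact absurd h1 (by rw [occ_ofFn_succ, if_pos h2.1, h2.2]; omega)
  have hb : Fintype.card {f : Fin (l+1) → Fin b // occCount w (List.ofFn (Fin.tail f)) ≤ k}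
      = Acnt b w k (l+1) + Fintype.card {f : Fin (l+1) → Fin b //
          (List.ofFn f).take w.length = w ∧ occCount w (List.ofFn (Fin.tail f)) = k} := by
    have hiff : ∀ f : Fin (l+1) → Fin b, occCount w (List.ofFn (Fin.tail f)) ≤ k ↔
        (occCount w (List.ofFn f) ≤ k ∨
          ((List.ofFn f).take w.length = w ∧ occCount w (List.ofFn (Fin.tail f)) = k)) := by
      intro f
      rw [occ_ofFn_succ]
      split_ifs with h
      · simp only [h, and_true, true_and]
        omega
      · simp only [h, false_and, or_false]
        omega
    rw [Fintype.card_congr (Equiv.subtypeEquivRight hiff),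
      Fintype.card_subtype_or_disjoint _ _ hdisj, Acnt]
  -- step c
  have hc : Fintype.card {f : Fin (l+1) → Fin b //
        (List.ofFn f).take w.length = w ∧ occCount w (List.ofFn (Fin.tail f)) = k}
      = Nxy b w v [] k l := by
    rw [Nxy]
    refine Fintype.card_congr ?_
    refine
      { toFun := fun f => ⟨Fin.tail f.1, f.2.2, ((take_w_iff b l w0 v f.1).1 f.2.1).2,
          List.nil_suffix⟩
        invFun := fun g => ⟨Fin.cons w0 g.1, ?_, ?_⟩
        left_inv := ?_
        right_inv := ?_ }
    · rw [take_w_iff]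
      exact ⟨by simp, by rw [Fin.tail_cons]; exact g.2.2.1⟩
    · rw [Fin.tail_cons]; exact g.2.1
    · intro f
      refine Subtype.ext ?_
      have h0 : f.1 0 = w0 := ((take_w_iff b l w0 v f.1).1 f.2.1).1
      have hct := Fin.cons_self_tail (α := fun _ => Fin b) f.1
      rw [h0] at hct
      exact hct
    · intro g
      exact Subtype.ext (Fin.tail_cons (α := fun _ => Fin b) w0 g.1)
  omega

lemma cardP (b l p : ℕ) (P : (Fin l → Fin b) → Prop) [DecidablePred P]
    (Q : (Fin p → Fin b) → Prop) [DecidablePred Q] :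
    Fintype.card {x : (Fin l → Fin b) × (Fin p → Fin b) // P x.1 ∧ Q x.2}
      = Fintype.card {g // P g} * Fintype.card {t // Q t} := by
  rw [Fintype.card_congr (Equiv.subtypeProdEquivProd), Fintype.card_prod]

lemma cardw (b p : ℕ) (w : List (Fin b)) (hp : w.length = p) :
    Fintype.card {t : Fin p → Fin b // List.ofFn t = w} = 1 := by
  subst hp
  rw [Fintype.card_eq_one_iff]
  refine ⟨⟨w.get, List.ofFn_get w⟩, fun t => Subtype.ext ?_⟩
  exact List.ofFn_injective (by rw [t.2, List.ofFn_get])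

lemma cardnw (b p : ℕ) (w : List (Fin b)) (hp : w.length = p) :
    Fintype.card {t : Fin p → Fin b // ¬ (List.ofFn t = w)} = b ^ p - 1 := by
  rw [Fintype.card_subtype_compl, cardw b p w hp]
  congr 1
  simp [Fintype.card_fun]

lemma core (b l p K : ℕ) (w : List (Fin b)) :
    Fintype.card {x : (Fin l → Fin b) × (Fin p → Fin b) //
        occCount w (List.ofFn x.1 ++ List.ofFn x.2) ≤ K} = Acnt b w K (l + p) := by
  rw [Acnt]
  refine Fintype.card_congr ?_
  refine
    { toFun := fun x => ⟨fun i => Sum.elim x.1.1 x.1.2 (finSumFinEquiv.symm i), ?_⟩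
      invFun := fun f => ⟨(fun i => f.1 (Fin.castAdd p i), fun j => f.1 (Fin.natAdd l j)), by
        have hf := f.2; rw [List.ofFn_add] at hf; exact hf⟩
      left_inv := ?_
      right_inv := ?_ }
  · rw [List.ofFn_add]
    show occCount w ((List.ofFn fun i : Fin l => Sum.elim x.1.1 x.1.2
      (finSumFinEquiv.symm (Fin.castAdd p i))) ++ _) ≤ K
    simpa using x.2
  · intro x
    refine Subtype.ext (Prod.ext ?_ ?_) <;> · funext i; simp
  · intro f
    refine Subtype.ext (funext fun i => ?_)
    obtain ⟨j, rfl⟩ : ∃ j, finSumFinEquiv j = i := ⟨_, Equiv.apply_symm_apply _ i⟩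
    cases j <;> simp

lemma bound_zero (b l p : ℕ) (w : List (Fin b)) (hp : w.length = p) (hw : w ≠ []) :
    Acnt b w 0 (l + p) ≤ (b ^ p - 1) * Acnt b w 0 l := by
  rw [← core]
  refine le_trans (Fintype.card_subtype_mono _
    (fun x : (Fin l → Fin b) × (Fin p → Fin b) =>
      occCount w (List.ofFn x.1) ≤ 0 ∧ ¬ (List.ofFn x.2 = w)) ?_) ?_
  · rintro ⟨g, t⟩ h
    simp only at h ⊢
    constructor
    · exact le_trans (occ_le_append w _ _) h
    · intro he
      rw [he] at h
      have := occ_append_w w (List.ofFn g) hw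
      omega
  · rw [cardP b l p (fun g => occCount w (List.ofFn g) ≤ 0) (fun t => ¬ (List.ofFn t = w)),
      cardnw b p w hp, Acnt, Nat.mul_comm]

lemma bound_succ (b l p K : ℕ) (w : List (Fin b)) (hp : w.length = p) (hw : w ≠ []) :
    Acnt b w (K+1) (l + p) ≤ (b ^ p - 1) * Acnt b w (K+1) l + Acnt b w K l := by
  rw [← core]
  refine le_trans (Fintype.card_subtype_mono _
    (fun x : (Fin l → Fin b) × (Fin p → Fin b) =>
      (occCount w (List.ofFn x.1) ≤ K + 1 ∧ ¬ (List.ofFn x.2 = w)) ∨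
      (occCount w (List.ofFn x.1) ≤ K ∧ List.ofFn x.2 = w)) ?_) ?_
  · rintro ⟨g, t⟩ h
    simp only at h ⊢
    by_cases he : List.ofFn t = w
    · refine Or.inr ⟨?_, he⟩
      rw [he] at h
      have := occ_append_w w (List.ofFn g) hw
      omega
    · exact Or.inl ⟨le_trans (occ_le_append w _ _) h, he⟩
  · refine le_trans (Fintype.card_subtype_or _ _) ?_
    rw [cardP b l p (fun g => occCount w (List.ofFn g) ≤ K + 1) (fun t => ¬ (List.ofFn t = w)),
      cardP b l p (fun g => occCount w (List.ofFn g) ≤ K) (fun t => List.ofFn t = w),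
      cardnw b p w hp, cardw b p w hp, Acnt, Acnt, Nat.mul_comm]
    omega

open Filter Topology

lemma aux_tendsto {u : ℕ → ℝ} (hanti : Antitone u) (hnn : ∀ l, 0 ≤ u l) {r : ℝ}
    (hr0 : 0 ≤ r) (hr1 : r < 1) {c : ℕ → ℝ} (hc : Tendsto c atTop (𝓝 0)) (p : ℕ)
    (hle : ∀ l, u (l + p) ≤ r * u l + c l) : Tendsto u atTop (𝓝 0) := by
  have hbdd : BddBelow (Set.range u) := ⟨0, by rintro x ⟨l, rfl⟩; exact hnn l⟩
  have hT : Tendsto u atTop (𝓝 (⨅ l, u l)) := tendsto_atTop_ciInf hanti hbdd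
  set ε := ⨅ l, u l with hε
  have hε0 : 0 ≤ ε := le_ciInf hnn
  have h1 : Tendsto (fun l => u (l + p)) atTop (𝓝 ε) := hT.comp (tendsto_add_atTop_nat p)
  have h2 : Tendsto (fun l => r * u l + c l) atTop (𝓝 (r * ε + 0)) := (hT.const_mul r).add hc
  have h3 : ε ≤ r * ε + 0 := le_of_tendsto_of_tendsto' h1 h2 hle
  have h4 : ε = 0 := by nlinarith
  rw [h4] at hT
  exact hT

lemma u_antitone (b : ℕ) (hb : 1 < b) (w0 : Fin b) (v : List (Fin b)) (k : ℕ) :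
    Antitone (fun L => (Acnt b (w0::v) k L : ℝ) * ((b:ℝ)⁻¹) ^ L) := by
  have hb0 : (b:ℝ) ≠ 0 := by positivity
  have hbβ : (b:ℝ) * (b:ℝ)⁻¹ = 1 := mul_inv_cancel₀ hb0
  refine antitone_nat_of_succ_le fun l => ?_
  have hkey : (Acnt b (w0::v) k (l+1) : ℝ) + (Nxy b (w0::v) v [] k l : ℝ)
      = (b:ℝ) * (Acnt b (w0::v) k l : ℝ) := by exact_mod_cast key b w0 v k l
  have hNnn : (0:ℝ) ≤ (Nxy b (w0::v) v [] k l : ℝ) := Nat.cast_nonneg _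
  have hβl : (b:ℝ) * ((b:ℝ)⁻¹)^(l+1) = ((b:ℝ)⁻¹)^l := by
    rw [pow_succ', ← mul_assoc, hbβ, one_mul]
  have hA : (Acnt b (w0::v) k (l+1) : ℝ) ≤ (b:ℝ) * (Acnt b (w0::v) k l : ℝ) := by linarith
  have hβpos : (0:ℝ) < ((b:ℝ)⁻¹)^(l+1) := by positivity
  calc (Acnt b (w0::v) k (l+1) : ℝ) * ((b:ℝ)⁻¹) ^ (l+1)
      ≤ ((b:ℝ) * (Acnt b (w0::v) k l : ℝ)) * ((b:ℝ)⁻¹) ^ (l+1) := by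
        exact mul_le_mul_of_nonneg_right hA (le_of_lt hβpos)
    _ = (Acnt b (w0::v) k l : ℝ) * ((b:ℝ)⁻¹) ^ l := by
        rw [mul_comm (b:ℝ), mul_assoc, hβl]

lemma ulim (b : ℕ) (hb : 1 < b) (w0 : Fin b) (v : List (Fin b)) (k : ℕ) :
    Tendsto (fun L => (Acnt b (w0::v) k L : ℝ) * ((b:ℝ)⁻¹) ^ L) atTop (𝓝 0) := by
  have hb0 : (b:ℝ) ≠ 0 := by positivity
  set w := w0 :: v with hwdef
  set p := w.length with hpdef
  set β : ℝ := (b:ℝ)⁻¹ with hβdef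
  have hβpos : (0:ℝ) < β := by rw [hβdef]; positivity
  have hβlt : β < 1 := by
    rw [hβdef, inv_lt_one_iff₀]
    right; exact_mod_cast hb
  have hq1 : (1:ℕ) ≤ b ^ p := Nat.one_le_pow _ _ (by omega)
  have hcast : ((b ^ p - 1 : ℕ) : ℝ) = (b:ℝ)^p - 1 := by
    push_cast [Nat.cast_sub hq1]; ring
  have hbβp : (b:ℝ)^p * β^p = 1 := by
    rw [hβdef, ← mul_pow, mul_inv_cancel₀ hb0, one_pow]
  set r : ℝ := ((b ^ p - 1 : ℕ) : ℝ) * β ^ p with hrdef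
  have hr_eq : r = 1 - β ^ p := by
    rw [hrdef, hcast, sub_mul, hbβp, one_mul]
  have hr0 : 0 ≤ r := by
    rw [hr_eq]
    have : β ^ p ≤ 1 := pow_le_one₀ (le_of_lt hβpos) (le_of_lt hβlt)
    linarith
  have hr1 : r < 1 := by
    rw [hr_eq]
    have : 0 < β ^ p := by positivity
    linarith
  have hwne : w ≠ [] := by simp [hwdef]
  induction k with
  | zero =>
    refine aux_tendsto (u_antitone b hb w0 v 0) (fun l => by positivity) hr0 hr1
      tendsto_const_nhds p (fun l => ?_)
    have h1 : (Acnt b w 0 (l + p) : ℝ) ≤ ((b ^ p - 1 : ℕ) : ℝ) * (Acnt b w 0 l : ℝ) := by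
      exact_mod_cast bound_zero b l p w rfl hwne
    have hβlp : (0:ℝ) < β ^ (l + p) := by positivity
    calc (Acnt b w 0 (l + p) : ℝ) * β ^ (l + p)
        ≤ (((b ^ p - 1 : ℕ) : ℝ) * (Acnt b w 0 l : ℝ)) * β ^ (l + p) :=
          mul_le_mul_of_nonneg_right h1 (le_of_lt hβlp)
      _ = r * ((Acnt b w 0 l : ℝ) * β ^ l) + 0 := by
          rw [hrdef, pow_add]; ring
  | succ K ih =>
    refine aux_tendsto (u_antitone b hb w0 v (K+1)) (fun l => by positivity) hr0 hr1
      (c := fun l => ((Acnt b w K l : ℝ) * β ^ l) * β ^ p) ?_ p (fun l => ?_)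
    · have := ih.mul_const (β ^ p)
      simpa using this
    · have h1 : (Acnt b w (K+1) (l + p) : ℝ) ≤
          ((b ^ p - 1 : ℕ) : ℝ) * (Acnt b w (K+1) l : ℝ) + (Acnt b w K l : ℝ) := by
        exact_mod_cast bound_succ b l p K w rfl hwne
      have hβlp : (0:ℝ) < β ^ (l + p) := by positivity
      calc (Acnt b w (K+1) (l + p) : ℝ) * β ^ (l + p)
          ≤ (((b ^ p - 1 : ℕ) : ℝ) * (Acnt b w (K+1) l : ℝ) + (Acnt b w K l : ℝ)) * β ^ (l + p) :=
            mul_le_mul_of_nonneg_right h1 (le_of_lt hβlp)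
        _ = r * ((Acnt b w (K+1) l : ℝ) * β ^ l) + ((Acnt b w K l : ℝ) * β ^ l) * β ^ p := by
            rw [hrdef, pow_add]; ring

end Aux

/-- The total mass `M_w(v,k) = Z_w(v,k)(1/b)` of `k`-admissible strings starting with the
`(p-1)`-suffix `v` of `w` equals `b` for every `k ≥ 0`. -/
theorem stmt6 (b : ℕ) (hb : 1 < b) (w : List (Fin b)) (hw : 1 ≤ w.length) (k : ℕ) :
    ∑' l : ℕ, (Nxy b w (w.drop 1) [] k l : ℝ) * ((b : ℝ)⁻¹) ^ l = (b : ℝ) := by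
  match w, hw with
  | w0 :: v, _ =>
  have hdrop : (w0 :: v).drop 1 = v := rfl
  rw [hdrop]
  have hb0 : (b:ℝ) ≠ 0 := by positivity
  have hbβ : (b:ℝ) * (b:ℝ)⁻¹ = 1 := mul_inv_cancel₀ hb0
  set β : ℝ := (b:ℝ)⁻¹ with hβdef
  set u : ℕ → ℝ := fun L => (Acnt b (w0::v) k L : ℝ) * β ^ L with hudef
  have hrec : ∀ l, (Nxy b (w0::v) v [] k l : ℝ) * β ^ l = (b:ℝ) * (u l - u (l+1)) := by
    intro l
    have hkey : (Acnt b (w0::v) k (l+1) : ℝ) + (Nxy b (w0::v) v [] k l : ℝ)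
        = (b:ℝ) * (Acnt b (w0::v) k l : ℝ) := by exact_mod_cast Aux.key b w0 v k l
    have hβl : (b:ℝ) * β^(l+1) = β^l := by
      rw [pow_succ', ← mul_assoc, hbβ, one_mul]
    have hkey2 : (Nxy b (w0::v) v [] k l : ℝ)
        = (b:ℝ) * (Acnt b (w0::v) k l : ℝ) - (Acnt b (w0::v) k (l+1) : ℝ) := by linarith
    rw [hudef]
    simp only
    linear_combination (β^l) * hkey2 + ((Acnt b (w0::v) k (l+1) : ℝ)) * hβl
  have hu0 : u 0 = 1 := by
    rw [hudef]; simp [Aux.Acnt_zero]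
  have hpsum : ∀ L, ∑ l ∈ Finset.range L, (Nxy b (w0::v) v [] k l : ℝ) * β ^ l
      = (b:ℝ) * (1 - u L) := by
    intro L
    rw [Finset.sum_congr rfl (fun l _ => hrec l), ← Finset.mul_sum,
      Finset.sum_range_sub' u L, hu0]
  have hlim : Tendsto (fun L => ∑ l ∈ Finset.range L, (Nxy b (w0::v) v [] k l : ℝ) * β ^ l)
      atTop (𝓝 (b:ℝ)) := by
    simp only [hpsum]
    have h1 : Tendsto (fun L => (b:ℝ) * (1 - u L)) atTop (𝓝 ((b:ℝ) * (1 - 0))) :=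
      ((tendsto_const_nhds.sub (Aux.ulim b hb w0 v k)).const_mul (b:ℝ))
    simpa using h1
  have hs : HasSum (fun l => (Nxy b (w0::v) v [] k l : ℝ) * β ^ l) (b:ℝ) :=
    (hasSum_iff_tendsto_nat_of_nonneg (fun l => by positivity) _).2 hlim
  exact hs.tsum_eq
end

section
/- The identities (1 - bt) t^{1-p} Z_w(v,0)(t) = 1 - t^{2-p} Z_w(v,0,u)(t) and (1 - bt) Z_w(0)(t) = 1 - t Z_w(v,0)(t) hold as formal power series; in particular evaluating at t = 1/b gives M_w(v,0) = b and M_w(v,0,u) = b^{2-p}. -/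
open scoped BigOperators
open PowerSeries


theorem infix_iff_drop {α : Type*} {w X : List α} : w <:+: X ↔ ∃ i, w <+: X.drop i := by
  constructor
  · rintro ⟨s, t, rfl⟩
    exact ⟨s.length, by simp [List.prefix_append]⟩
  · rintro ⟨i, h⟩
    exact h.isInfix.trans (List.drop_suffix i X).isInfix

theorem infix_cons_iff' {α : Type*} {w Y : List α} {c : α} :
    w <:+: (c :: Y) ↔ w <+: (c :: Y) ∨ w <:+: Y := by
  constructor
  · intro h
    obtain ⟨i, hi⟩ := infix_iff_drop.1 h
    cases i with
    | zero => exact Or.inl hi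
    | succ i => exact Or.inr (infix_iff_drop.2 ⟨i, hi⟩)
  · rintro (h | h)
    · exact h.isInfix
    · exact h.trans (List.suffix_cons c Y).isInfix

theorem infix_snoc_iff {α : Type*} {w Y : List α} {c : α} :
    w <:+: (Y ++ [c]) ↔ w <:+: Y ∨ w <:+ (Y ++ [c]) := by
  rw [← List.reverse_infix, List.reverse_append]
  simp only [List.reverse_cons, List.reverse_nil, List.nil_append, List.singleton_append]
  rw [infix_cons_iff']
  constructor
  · rintro (h | h)
    · right
      rwa [show c :: Y.reverse = (Y ++ [c]).reverse by simp, List.reverse_prefix] at h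
    · left; rwa [List.reverse_infix] at h
  · rintro (h | h)
    · right; rwa [List.reverse_infix]
    · left
      rwa [show c :: Y.reverse = (Y ++ [c]).reverse by simp, List.reverse_prefix]

theorem occCount_zero_iff {α : Type*} [DecidableEq α] {w X : List α} (hw : w ≠ []) :
    ((List.range X.length).filter fun i => (X.drop i).take w.length = w).length = 0
      ↔ ¬ w <:+: X := by
  rw [List.length_eq_zero_iff, List.filter_eq_nil_iff]
  constructor
  · intro h hinf
    obtain ⟨i, hi⟩ := infix_iff_drop.1 hinf
    have hne : X.drop i ≠ [] := fun he => hw (List.prefix_nil.1 (he ▸ hi))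
    have hilt : i < X.length := by
      by_contra hle
      exact hne (List.drop_eq_nil_iff.2 (le_of_not_gt hle))
    exact h i (List.mem_range.2 hilt)
      (by simp [(List.prefix_iff_eq_take.1 hi).symm])
  · intro h i _ hi
    have hi' : (X.drop i).take w.length = w := by simpa using hi
    exact h (infix_iff_drop.2 ⟨i, List.prefix_iff_eq_take.2 hi'.symm⟩)

theorem prefix_cons_iff_w {α : Type*} {w Y : List α} {c : α} (hw : w ≠ []) :
    w <+: (c :: Y) ↔ c = w.head hw ∧ w.drop 1 <+: Y := by
  conv_lhs => rw [← List.cons_head_tail hw]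
  rw [List.cons_prefix_cons, List.drop_one, eq_comm]

theorem suffix_snoc_iff_w {α : Type*} {w Y : List α} {c : α} (hw : w ≠ []) :
    w <:+ (Y ++ [c]) ↔ c = w.getLast hw ∧ w.dropLast <:+ Y := by
  rw [← List.reverse_prefix]
  conv_lhs => rw [← List.dropLast_append_getLast hw]
  rw [List.reverse_append, List.reverse_append]
  simp only [List.reverse_cons, List.reverse_nil, List.nil_append, List.singleton_append]
  rw [List.cons_prefix_cons, List.reverse_prefix, eq_comm]

theorem prefix_snoc_iff_len {α : Type*} {v Y : List α} {c : α} (h : v.length ≤ Y.length) :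
    v <+: (Y ++ [c]) ↔ v <+: Y := by
  constructor
  · intro hp
    rw [List.prefix_iff_eq_take] at hp ⊢
    rwa [List.take_append_of_le_length h] at hp
  · intro hp
    exact hp.trans (List.prefix_append Y [c])

/-- count of strings of length `l` satisfying `P`. -/
noncomputable def cnt (b : ℕ) (P : List (Fin b) → Prop) (l : ℕ) : ℕ :=
  Nat.card {f : Fin l → Fin b // P (List.ofFn f)}

theorem cnt_congr {b : ℕ} {P Q : List (Fin b) → Prop} {l : ℕ}
    (h : ∀ X : List (Fin b), X.length = l → (P X ↔ Q X)) : cnt b P l = cnt b Q l :=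
  Nat.card_congr (Equiv.subtypeEquivRight fun f => h _ (by simp))

theorem cnt_zero_of {b : ℕ} {P : List (Fin b) → Prop} {l : ℕ}
    (h : ∀ X : List (Fin b), X.length = l → ¬ P X) : cnt b P l = 0 := by
  have : IsEmpty {f : Fin l → Fin b // P (List.ofFn f)} :=
    ⟨fun x => h _ (by simp) x.2⟩
  exact Nat.card_of_isEmpty

theorem cnt_single {b : ℕ} {v : List (Fin b)} : cnt b (· = v) v.length = 1 := by
  rw [cnt, Nat.card_eq_one_iff_unique]
  exact ⟨⟨fun x y => Subtype.ext (List.ofFn_inj.1 (x.2.trans y.2.symm))⟩,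
    ⟨⟨v.get, List.ofFn_get v⟩⟩⟩

theorem cnt_mono {b : ℕ} {P Q : List (Fin b) → Prop} {l : ℕ}
    (h : ∀ X : List (Fin b), P X → Q X) : cnt b P l ≤ cnt b Q l :=
  Nat.card_le_card_of_injective (fun x => ⟨x.1, h _ x.2⟩)
    (fun x y hxy => Subtype.ext (by injection hxy))

theorem card_split {α : Type*} [Fintype α] (P Q : α → Prop) :
    Nat.card {x // P x} = Nat.card {x // P x ∧ Q x} + Nat.card {x // P x ∧ ¬ Q x} := by
  classical
  simp only [Nat.card_eq_fintype_card, Fintype.card_subtype]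
  rw [← Finset.card_filter_add_card_filter_not (s := Finset.univ.filter P) Q]
  congr 1 <;> rw [Finset.filter_filter]

theorem cnt_cons {b l : ℕ} (P : List (Fin b) → Prop) :
    cnt b P (l + 1) =
      Nat.card {cg : Fin b × (Fin l → Fin b) // P (cg.1 :: List.ofFn cg.2)} :=
  Nat.card_congr ((Fin.consEquiv fun _ : Fin (l + 1) => Fin b).symm.subtypeEquiv fun f => by
    rw [List.ofFn_succ]; exact Iff.rfl)

/-- snoc equivalence -/
def snocEquiv' (b l : ℕ) : (Fin (l + 1) → Fin b) ≃ (Fin l → Fin b) × Fin b where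
  toFun f := (fun i => f i.castSucc, f (Fin.last l))
  invFun gc := Fin.snoc gc.1 gc.2
  left_inv f := by
    funext i
    refine Fin.lastCases ?_ ?_ i <;> simp
  right_inv gc := by
    obtain ⟨g, c⟩ := gc
    simp [Fin.snoc_castSucc]

theorem cnt_snoc {b l : ℕ} (P : List (Fin b) → Prop) :
    cnt b P (l + 1) =
      Nat.card {gc : (Fin l → Fin b) × Fin b // P (List.ofFn gc.1 ++ [gc.2])} :=
  Nat.card_congr ((snocEquiv' b l).subtypeEquiv fun f => by
    rw [List.ofFn_succ', List.concat_eq_append]; exact Iff.rfl)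

theorem card_fst_free {b : ℕ} {γ : Type*} [Fintype γ] (Q : γ → Prop) :
    Nat.card {cg : Fin b × γ // Q cg.2} = b * Nat.card {g : γ // Q g} := by
  have e : {cg : Fin b × γ // Q cg.2} ≃ Fin b × {g : γ // Q g} :=
    ⟨fun x => (x.1.1, ⟨x.1.2, x.2⟩), fun y => ⟨(y.1, y.2.1), y.2.2⟩,
      fun x => rfl, fun y => rfl⟩
  rw [Nat.card_congr e, Nat.card_prod, Nat.card_eq_fintype_card (α := Fin b),
    Fintype.card_fin]

theorem card_snd_free {b : ℕ} {γ : Type*} [Fintype γ] (Q : γ → Prop) :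
    Nat.card {gc : γ × Fin b // Q gc.1} = b * Nat.card {g : γ // Q g} := by
  have e : {gc : γ × Fin b // Q gc.1} ≃ Fin b × {g : γ // Q g} :=
    ⟨fun x => (x.1.2, ⟨x.1.1, x.2⟩), fun y => ⟨(y.2.1, y.1), y.2.2⟩,
      fun x => rfl, fun y => rfl⟩
  rw [Nat.card_congr e, Nat.card_prod, Nat.card_eq_fintype_card (α := Fin b),
    Fintype.card_fin]

theorem card_fixed_fst {α γ : Type*} (a : α) (Q : γ → Prop) :
    Nat.card {cg : α × γ // cg.1 = a ∧ Q cg.2} = Nat.card {g : γ // Q g} :=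
  Nat.card_congr
    ⟨fun x => ⟨x.1.2, x.2.2⟩, fun y => ⟨(a, y.1), rfl, y.2⟩,
      by rintro ⟨⟨c, g⟩, rfl, h2⟩; rfl, fun y => rfl⟩

theorem card_fixed_snd {α γ : Type*} (a : α) (Q : γ → Prop) :
    Nat.card {gc : γ × α // gc.2 = a ∧ Q gc.1} = Nat.card {g : γ // Q g} :=
  Nat.card_congr
    ⟨fun x => ⟨x.1.1, x.2.2⟩, fun y => ⟨(y.1, a), rfl, y.2⟩,
      by rintro ⟨⟨g, c⟩, rfl, h2⟩; rfl, fun y => rfl⟩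

theorem rec2 (b : ℕ) (w : List (Fin b)) (hw : w ≠ []) (l : ℕ) :
    cnt b (fun X => ¬ w <:+: X) (l + 1)
      + cnt b (fun X => ¬ w <:+: X ∧ w.drop 1 <+: X) l
      = b * cnt b (fun X => ¬ w <:+: X) l := by
  have h1 : b * cnt b (fun X => ¬ w <:+: X) l
      = Nat.card {cg : Fin b × (Fin l → Fin b) // ¬ w <:+: List.ofFn cg.2} :=
    (card_fst_free _).symm
  rw [h1, card_split (P := fun cg : Fin b × (Fin l → Fin b) => ¬ w <:+: List.ofFn cg.2)
    (Q := fun cg : Fin b × (Fin l → Fin b) => w <+: (cg.1 :: List.ofFn cg.2)), add_comm]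
  congr 1
  · have h2 : Nat.card {cg : Fin b × (Fin l → Fin b) //
        ¬ w <:+: List.ofFn cg.2 ∧ w <+: (cg.1 :: List.ofFn cg.2)}
      = Nat.card {cg : Fin b × (Fin l → Fin b) //
        cg.1 = w.head hw ∧ (¬ w <:+: List.ofFn cg.2 ∧ w.drop 1 <+: List.ofFn cg.2)} := by
      refine Nat.card_congr (Equiv.subtypeEquivRight fun cg => ?_)
      rw [prefix_cons_iff_w hw]
      tauto
    rw [h2]
    exact (card_fixed_fst (w.head hw) fun g : Fin l → Fin b =>
      ¬ w <:+: List.ofFn g ∧ w.drop 1 <+: List.ofFn g).symm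
  · rw [cnt_cons]
    refine Nat.card_congr (Equiv.subtypeEquivRight fun cg => ?_)
    rw [infix_cons_iff']
    tauto

theorem rec1 (b : ℕ) (w : List (Fin b)) (hw : w ≠ []) (l : ℕ) (hl : w.length - 1 ≤ l) :
    cnt b (fun X => ¬ w <:+: X ∧ w.drop 1 <+: X) (l + 1)
      + cnt b (fun X => ¬ w <:+: X ∧ w.drop 1 <+: X ∧ w.dropLast <:+ X) l
      = b * cnt b (fun X => ¬ w <:+: X ∧ w.drop 1 <+: X) l := by
  have hvlen : (w.drop 1).length ≤ l := by
    simp only [List.length_drop]; exact hl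
  have h1 : b * cnt b (fun X => ¬ w <:+: X ∧ w.drop 1 <+: X) l
      = Nat.card {gc : (Fin l → Fin b) × Fin b //
          ¬ w <:+: List.ofFn gc.1 ∧ w.drop 1 <+: List.ofFn gc.1} :=
    (card_snd_free _).symm
  rw [h1, card_split
    (P := fun gc : (Fin l → Fin b) × Fin b =>
      ¬ w <:+: List.ofFn gc.1 ∧ w.drop 1 <+: List.ofFn gc.1)
    (Q := fun gc : (Fin l → Fin b) × Fin b => w <:+ (List.ofFn gc.1 ++ [gc.2])), add_comm]
  congr 1
  · have h2 : Nat.card {gc : (Fin l → Fin b) × Fin b //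
        (¬ w <:+: List.ofFn gc.1 ∧ w.drop 1 <+: List.ofFn gc.1)
          ∧ w <:+ (List.ofFn gc.1 ++ [gc.2])}
      = Nat.card {gc : (Fin l → Fin b) × Fin b //
        gc.2 = w.getLast hw ∧ (¬ w <:+: List.ofFn gc.1 ∧ w.drop 1 <+: List.ofFn gc.1
          ∧ w.dropLast <:+ List.ofFn gc.1)} := by
      refine Nat.card_congr (Equiv.subtypeEquivRight fun gc => ?_)
      rw [suffix_snoc_iff_w hw]
      tauto
    rw [h2]
    exact (card_fixed_snd (w.getLast hw) fun g : Fin l → Fin b =>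
      ¬ w <:+: List.ofFn g ∧ w.drop 1 <+: List.ofFn g ∧ w.dropLast <:+ List.ofFn g).symm
  · rw [cnt_snoc]
    refine Nat.card_congr (Equiv.subtypeEquivRight fun gc => ?_)
    rw [infix_snoc_iff, prefix_snoc_iff_len (by simpa using hvlen)]
    tauto

theorem cnt_A_zero (b : ℕ) (w : List (Fin b)) (hw : w ≠ []) :
    cnt b (fun X => ¬ w <:+: X) 0 = 1 := by
  have h : ∀ X : List (Fin b), X.length = 0 →
      ((¬ w <:+: X) ↔ X = ([] : List (Fin b))) := by
    intro X hX
    have : X = [] := List.length_eq_zero_iff.1 hX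
    subst this
    simp [List.infix_nil, hw]
  rw [cnt_congr h]
  exact cnt_single (v := ([] : List (Fin b)))

theorem cnt_pre_small (b : ℕ) (w : List (Fin b)) {P : List (Fin b) → Prop} {l : ℕ}
    (hP : ∀ X, P X → w.drop 1 <+: X) (hl : l < w.length - 1) : cnt b P l = 0 := by
  refine cnt_zero_of fun X hX hPX => ?_
  have := (hP X hPX).length_le
  simp only [List.length_drop] at this
  omega

theorem cnt_PV_base (b : ℕ) (w : List (Fin b)) (hw : w ≠ []) :
    cnt b (fun X => ¬ w <:+: X ∧ w.drop 1 <+: X) (w.length - 1) = 1 := by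
  have hv : (w.drop 1).length = w.length - 1 := by simp
  have h : ∀ X : List (Fin b), X.length = w.length - 1 →
      ((¬ w <:+: X ∧ w.drop 1 <+: X) ↔ X = w.drop 1) := by
    intro X hX
    constructor
    · rintro ⟨-, h2⟩
      exact (h2.eq_of_length (by omega)).symm
    · rintro rfl
      refine ⟨fun hinf => ?_, List.prefix_refl _⟩
      have h3 := hinf.length_le
      have h4 : 0 < w.length := List.length_pos_iff.2 hw
      omega
  rw [cnt_congr h, ← hv]
  exact cnt_single

theorem cnt_A_block (b : ℕ) (w : List (Fin b)) (hw : w ≠ []) (L : ℕ) :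
    cnt b (fun X => ¬ w <:+: X) (w.length + L)
      ≤ (b ^ w.length - 1) * cnt b (fun X => ¬ w <:+: X) L := by
  classical
  set p := w.length with hp
  have key : ∀ f : Fin (p + L) → Fin b, ¬ w <:+: List.ofFn f →
      (List.ofFn fun i : Fin p => f (Fin.castAdd L i)) ≠ w
        ∧ ¬ w <:+: (List.ofFn fun j : Fin L => f (Fin.natAdd p j)) := by
    intro f hf
    constructor
    · intro he
      refine hf ?_
      have : w <+: List.ofFn f := by
        rw [List.ofFn_add, ← he]
        exact List.prefix_append _ _
      exact this.isInfix
    · intro hinf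
      refine hf (hinf.trans ?_)
      rw [List.ofFn_add (f := f)]
      exact (List.suffix_append _ _).isInfix
  have hinj : Function.Injective
      (fun x : {f : Fin (p + L) → Fin b // ¬ w <:+: List.ofFn f} =>
        ((⟨fun i => x.1 (Fin.castAdd L i), (key x.1 x.2).1⟩,
          ⟨fun j => x.1 (Fin.natAdd p j), (key x.1 x.2).2⟩) :
          {g : Fin p → Fin b // List.ofFn g ≠ w}
            × {h : Fin L → Fin b // ¬ w <:+: List.ofFn h})) := by
    rintro ⟨f, hf⟩ ⟨f', hf'⟩ hFF
    simp only [Prod.mk.injEq, Subtype.mk.injEq] at hFF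
    obtain ⟨h1, h2⟩ := hFF
    refine Subtype.ext (funext fun i => ?_)
    refine Fin.addCases (fun i => ?_) (fun j => ?_) i
    · exact congrFun h1 i
    · exact congrFun h2 j
  have hcard1 : Nat.card {g : Fin p → Fin b // List.ofFn g ≠ w} = b ^ p - 1 := by
    rw [Nat.card_eq_fintype_card]
    have : Fintype.card {g : Fin p → Fin b // ¬ List.ofFn g = w} =
        Fintype.card (Fin p → Fin b) - Fintype.card {g : Fin p → Fin b // List.ofFn g = w} :=
      Fintype.card_subtype_compl _
    rw [this]
    have h1 : Fintype.card {g : Fin p → Fin b // List.ofFn g = w} = 1 := by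
      rw [Fintype.card_congr (Equiv.subtypeEquivRight (q := fun g => g = w.get) fun g => ?_),
        Fintype.card_subtype_eq]
      constructor
      · intro h; exact List.ofFn_inj.1 (h.trans (List.ofFn_get w).symm)
      · rintro rfl; exact List.ofFn_get w
    rw [h1]
    congr 1
    simp [Fintype.card_fun]
  calc cnt b (fun X => ¬ w <:+: X) (p + L)
      ≤ Nat.card ({g : Fin p → Fin b // List.ofFn g ≠ w}
          × {h : Fin L → Fin b // ¬ w <:+: List.ofFn h}) :=
        Nat.card_le_card_of_injective _ hinj
    _ = (b ^ p - 1) * cnt b (fun X => ¬ w <:+: X) L := by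
        rw [Nat.card_prod, hcard1]; rfl

open Filter in
theorem tendsto_eA (b : ℕ) (hb : 1 < b) (w : List (Fin b)) (hw : w ≠ []) :
    Tendsto (fun L => (cnt b (fun X => ¬ w <:+: X) L : ℝ) * ((b : ℝ)⁻¹) ^ L)
      atTop (nhds 0) := by
  set p := w.length with hpdef
  have hp : 0 < p := List.length_pos_iff.2 hw
  set r : ℝ := (b : ℝ)⁻¹ with hrdef
  have hb0 : (0 : ℝ) < b := by positivity
  have hb1 : (1 : ℝ) < b := by exact_mod_cast hb
  have hr0 : 0 < r := by positivity
  have hr1 : r < 1 := by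
    rw [hrdef, inv_lt_one_iff₀]; right; exact hb1
  have hbr : (b : ℝ) * r = 1 := mul_inv_cancel₀ (ne_of_gt hb0)
  set a : ℕ → ℕ := cnt b (fun X => ¬ w <:+: X) with hadef
  set e : ℕ → ℝ := fun L => (a L : ℝ) * r ^ L with hedef
  have he0 : ∀ L, 0 ≤ e L := fun L => by positivity
  have hstep : ∀ L, e (L + 1) ≤ e L := by
    intro L
    have h1 : a (L + 1) ≤ b * a L := by
      have h2 := rec2 b w hw L
      rw [← hadef] at h2
      omega
    have h1' : (a (L + 1) : ℝ) ≤ (b : ℝ) * a L := by exact_mod_cast h1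
    calc e (L + 1) = (a (L + 1) : ℝ) * (r ^ L * r) := by simp only [hedef, pow_succ]
      _ ≤ ((b : ℝ) * a L) * (r ^ L * r) := by
          apply mul_le_mul_of_nonneg_right h1' (by positivity)
      _ = (a L : ℝ) * r ^ L * ((b : ℝ) * r) := by ring
      _ = e L := by rw [hbr, mul_one]
  have hanti : Antitone e := antitone_nat_of_succ_le hstep
  set q : ℝ := 1 - r ^ p with hqdef
  have hrp1 : r ^ p ≤ 1 := pow_le_one₀ (le_of_lt hr0) (le_of_lt hr1)
  have hrp0 : 0 < r ^ p := by positivity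
  have hq0 : 0 ≤ q := by rw [hqdef]; linarith
  have hq1 : q < 1 := by rw [hqdef]; linarith
  have hblock : ∀ L, e (p + L) ≤ q * e L := by
    intro L
    have h1 := cnt_A_block b w hw L
    have hbp : 1 ≤ b ^ p := Nat.one_le_pow _ _ (by omega)
    have h1' : (a (p + L) : ℝ) ≤ ((b : ℝ) ^ p - 1) * a L := by
      have := h1
      rw [← hadef] at this
      calc (a (p + L) : ℝ) ≤ ((b ^ p - 1) * a L : ℕ) := by exact_mod_cast this
        _ = ((b : ℝ) ^ p - 1) * a L := by
            push_cast [Nat.cast_sub hbp]; ring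
    have hbrp : (b : ℝ) ^ p * r ^ p = 1 := by
      rw [← mul_pow, hbr, one_pow]
    calc e (p + L) = (a (p + L) : ℝ) * (r ^ p * r ^ L) := by
          simp only [hedef, pow_add]
      _ ≤ (((b : ℝ) ^ p - 1) * a L) * (r ^ p * r ^ L) := by
          apply mul_le_mul_of_nonneg_right h1' (by positivity)
      _ = (((b : ℝ) ^ p * r ^ p) - r ^ p) * ((a L : ℝ) * r ^ L) := by ring
      _ = q * e L := by simp only [hbrp, hedef, hqdef]
  have ha0 : a 0 = 1 := cnt_A_zero b w hw
  have hgeo : ∀ m, e (p * m) ≤ q ^ m := by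
    intro m
    induction m with
    | zero => simp [hedef, ha0]
    | succ m ih =>
        have : p * (m + 1) = p + p * m := by ring
        rw [this, pow_succ]
        calc e (p + p * m) ≤ q * e (p * m) := hblock _
          _ ≤ q * q ^ m := mul_le_mul_of_nonneg_left ih hq0
          _ = q ^ m * q := by ring
  have hbound : ∀ L, e L ≤ q ^ (L / p) := by
    intro L
    have h1 : p * (L / p) ≤ L := by
      rw [mul_comm]; exact Nat.div_mul_le_self L p
    exact le_trans (hanti h1) (hgeo _)
  have hdiv : Tendsto (fun L : ℕ => L / p) atTop atTop :=
    tendsto_atTop_atTop.2 fun n => ⟨n * p, fun m hm => (Nat.le_div_iff_mul_le hp).2 hm⟩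
  exact squeeze_zero he0 hbound
    ((tendsto_pow_atTop_nhds_zero_of_lt_one hq0 hq1).comp hdiv)

open Filter in
theorem hasSum_NV (b : ℕ) (hb : 1 < b) (w : List (Fin b)) (hw : w ≠ []) :
    HasSum (fun l => (cnt b (fun X => ¬ w <:+: X ∧ w.drop 1 <+: X) l : ℝ)
      * ((b : ℝ)⁻¹) ^ l) (b : ℝ) := by
  set r : ℝ := (b : ℝ)⁻¹ with hrdef
  have hb0 : (0 : ℝ) < b := by positivity
  have hbr : (b : ℝ) * r = 1 := mul_inv_cancel₀ (ne_of_gt hb0)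
  set a : ℕ → ℕ := cnt b (fun X => ¬ w <:+: X) with hadef
  set nv : ℕ → ℕ := cnt b (fun X => ¬ w <:+: X ∧ w.drop 1 <+: X) with hnvdef
  have hsum : ∀ L, ∑ l ∈ Finset.range L, (nv l : ℝ) * r ^ l
      = (b : ℝ) - (b : ℝ) * ((a L : ℝ) * r ^ L) := by
    intro L
    induction L with
    | zero => simp [hadef, cnt_A_zero b w hw]
    | succ L ih =>
        rw [Finset.sum_range_succ, ih]
        have hc := rec2 b w hw L
        rw [← hadef, ← hnvdef] at hc
        have hc' : (a (L + 1) : ℝ) + nv L = (b : ℝ) * a L := by exact_mod_cast hc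
        rw [pow_succ]
        linear_combination ((r : ℝ) ^ L) * hc' + ((a (L + 1) : ℝ) * r ^ L) * hbr
  have htend : Tendsto (fun L => ∑ l ∈ Finset.range L, (nv l : ℝ) * r ^ l)
      atTop (nhds (b : ℝ)) := by
    rw [show (fun L => ∑ l ∈ Finset.range L, (nv l : ℝ) * r ^ l)
        = fun L => (b : ℝ) - (b : ℝ) * ((a L : ℝ) * r ^ L) from funext hsum]
    have h0 := (tendsto_eA b hb w hw).const_mul (b : ℝ)
    rw [← hadef, ← hrdef] at h0
    have := (tendsto_const_nhds (α := ℕ) (x := (b : ℝ)) (f := atTop)).sub h0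
    simpa using this
  exact (hasSum_iff_tendsto_nat_of_nonneg (fun i => by positivity) _).2 htend

open Filter in
theorem hasSum_NVU (b : ℕ) (hb : 1 < b) (w : List (Fin b)) (hw : w ≠ []) :
    HasSum (fun l => (cnt b
        (fun X => ¬ w <:+: X ∧ w.drop 1 <+: X ∧ w.dropLast <:+ X) l : ℝ)
      * ((b : ℝ)⁻¹) ^ l)
      ((b : ℝ) * ((b : ℝ)⁻¹) ^ (w.length - 1)) := by
  set p := w.length with hpdef
  set r : ℝ := (b : ℝ)⁻¹ with hrdef
  have hb0 : (0 : ℝ) < b := by positivity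
  have hbr : (b : ℝ) * r = 1 := mul_inv_cancel₀ (ne_of_gt hb0)
  set nv : ℕ → ℕ := cnt b (fun X => ¬ w <:+: X ∧ w.drop 1 <+: X) with hnvdef
  set nvu : ℕ → ℕ := cnt b
    (fun X => ¬ w <:+: X ∧ w.drop 1 <+: X ∧ w.dropLast <:+ X) with hnvudef
  have hsum : ∀ L, p - 1 ≤ L → ∑ l ∈ Finset.range L, (nvu l : ℝ) * r ^ l
      = (b : ℝ) * r ^ (p - 1) - (b : ℝ) * ((nv L : ℝ) * r ^ L) := by
    intro L hL
    induction L, hL using Nat.le_induction with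
    | base =>
        have hz : ∑ l ∈ Finset.range (p - 1), (nvu l : ℝ) * r ^ l = 0 := by
          refine Finset.sum_eq_zero fun l hl => ?_
          rw [hnvudef, cnt_pre_small b w (fun X hX => hX.2.1) (Finset.mem_range.1 hl)]
          simp
        rw [hz, hnvdef, cnt_PV_base b w hw]
        simp
    | succ L hL ih =>
        rw [Finset.sum_range_succ, ih]
        have hc := rec1 b w hw L hL
        rw [← hnvdef, ← hnvudef] at hc
        have hc' : (nv (L + 1) : ℝ) + nvu L = (b : ℝ) * nv L := by exact_mod_cast hc
        rw [pow_succ]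
        linear_combination ((r : ℝ) ^ L) * hc' + ((nv (L + 1) : ℝ) * r ^ L) * hbr
  have hnvle : ∀ L, nv L ≤ cnt b (fun X => ¬ w <:+: X) L := fun L =>
    cnt_mono fun X h => h.1
  have htnv : Tendsto (fun L => (nv L : ℝ) * r ^ L) atTop (nhds 0) := by
    refine squeeze_zero (fun L => by positivity) (fun L => ?_) (tendsto_eA b hb w hw)
    have : (nv L : ℝ) ≤ (cnt b (fun X => ¬ w <:+: X) L : ℝ) := by
      exact_mod_cast hnvle L
    exact mul_le_mul_of_nonneg_right this (by positivity)
  have htend : Tendsto (fun L => ∑ l ∈ Finset.range L, (nvu l : ℝ) * r ^ l)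
      atTop (nhds ((b : ℝ) * r ^ (p - 1))) := by
    have heq : (fun L => (b : ℝ) * r ^ (p - 1) - (b : ℝ) * ((nv L : ℝ) * r ^ L))
        =ᶠ[atTop] (fun L => ∑ l ∈ Finset.range L, (nvu l : ℝ) * r ^ l) := by
      filter_upwards [eventually_ge_atTop (p - 1)] with L hL
      exact (hsum L hL).symm
    refine Tendsto.congr' heq ?_
    have h0 := htnv.const_mul (b : ℝ)
    have := (tendsto_const_nhds (α := ℕ)
      (x := (b : ℝ) * r ^ (p - 1)) (f := atTop)).sub h0
    simpa using this
  exact (hasSum_iff_tendsto_nat_of_nonneg (fun i => by positivity) _).2 htend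


theorem occCount_eq_zero_iff_s7 {α : Type*} [DecidableEq α] {w X : List α} (hw : w ≠ []) :
    occCount w X = 0 ↔ ¬ w <:+: X := by
  rw [occCount]; exact occCount_zero_iff hw

theorem Nxy_eq_cnt (b : ℕ) (w x y : List (Fin b)) (hw : w ≠ []) (l : ℕ) :
    Nxy b w x y 0 l = cnt b (fun X => ¬ w <:+: X ∧ x <+: X ∧ y <:+ X) l := by
  rw [Nxy, ← Nat.card_eq_fintype_card]
  exact cnt_congr (P := fun X => occCount w X = 0 ∧ x <+: X ∧ y <:+ X)
    fun X _ => and_congr (occCount_eq_zero_iff_s7 hw) Iff.rfl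

theorem Nxy_A (b : ℕ) (w : List (Fin b)) (hw : w ≠ []) (l : ℕ) :
    Nxy b w [] [] 0 l = cnt b (fun X => ¬ w <:+: X) l := by
  rw [Nxy_eq_cnt b w [] [] hw l]
  exact cnt_congr fun X _ => by simp

theorem Nxy_PV (b : ℕ) (w : List (Fin b)) (hw : w ≠ []) (l : ℕ) :
    Nxy b w (w.drop 1) [] 0 l
      = cnt b (fun X => ¬ w <:+: X ∧ w.drop 1 <+: X) l := by
  rw [Nxy_eq_cnt b w _ [] hw l]
  exact cnt_congr fun X _ => by simp

theorem Nxy_PVU (b : ℕ) (w : List (Fin b)) (hw : w ≠ []) (l : ℕ) :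
    Nxy b w (w.drop 1) (w.take (w.length - 1)) 0 l
      = cnt b (fun X => ¬ w <:+: X ∧ w.drop 1 <+: X ∧ w.dropLast <:+ X) l := by
  rw [Nxy_eq_cnt b w _ _ hw l]
  exact cnt_congr fun X _ => by rw [← List.dropLast_eq_take]

theorem stmt7' (b : ℕ) (hb : 1 < b) (w : List (Fin b)) (hw : 1 ≤ w.length) :
    (1 - PowerSeries.C (b : ℚ) * X) * Zser b w (w.drop 1) [] 0 =
        (X : PowerSeries ℚ) ^ (w.length - 1) -
          X * Zser b w (w.drop 1) (w.take (w.length - 1)) 0 ∧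
    (1 - PowerSeries.C (b : ℚ) * X) * Zser b w [] [] 0 =
        1 - X * Zser b w (w.drop 1) [] 0 ∧
    ∑' l : ℕ, (Nxy b w (w.drop 1) [] 0 l : ℝ) * ((b : ℝ)⁻¹) ^ l = (b : ℝ) ∧
    ∑' l : ℕ, (Nxy b w (w.drop 1) (w.take (w.length - 1)) 0 l : ℝ) * ((b : ℝ)⁻¹) ^ l =
      (b : ℝ) ^ ((2 : ℤ) - (w.length : ℤ)) := by
  have hwne : w ≠ [] := List.ne_nil_of_length_pos (by omega)
  have hXmul0 : ∀ Z : PowerSeries ℚ, PowerSeries.coeff 0 (X * Z) = 0 := fun Z => by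
    rw [PowerSeries.coeff_zero_eq_constantCoeff, map_mul, PowerSeries.constantCoeff_X,
      zero_mul]
  refine ⟨?_, ?_, ?_, ?_⟩
  · -- first power series identity
    refine PowerSeries.ext fun n => ?_
    rw [sub_mul, one_mul, mul_assoc, map_sub, PowerSeries.coeff_C_mul, map_sub,
      PowerSeries.coeff_X_pow]
    cases n with
    | zero =>
        rw [hXmul0, hXmul0, Zser, PowerSeries.coeff_mk, Nxy_PV b w hwne]
        by_cases h1 : w.length = 1
        · have h0 : w.length - 1 = 0 := by omega
          have hbase := cnt_PV_base b w hwne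
          rw [h0] at hbase
          rw [hbase]
          simp [h0]
        · rw [cnt_pre_small b w (fun X hX => hX.2) (by omega)]
          have : ¬ (0 = w.length - 1) := by omega
          simp [this]
    | succ n =>
        rw [PowerSeries.coeff_succ_X_mul, PowerSeries.coeff_succ_X_mul, Zser, Zser,
          PowerSeries.coeff_mk, PowerSeries.coeff_mk, PowerSeries.coeff_mk,
          Nxy_PV b w hwne, Nxy_PV b w hwne, Nxy_PVU b w hwne]
        rcases lt_trichotomy (n + 1) (w.length - 1) with hlt | heq | hgt
        · rw [cnt_pre_small b w (fun X hX => hX.2) hlt,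
            cnt_pre_small b w (fun X hX => hX.2) (by omega),
            cnt_pre_small b w (fun X hX => hX.2.1) (by omega)]
          have : ¬ (n + 1 = w.length - 1) := by omega
          simp [this]
        · have hbase := cnt_PV_base b w hwne
          rw [← heq] at hbase
          rw [hbase, cnt_pre_small b w (fun X hX => hX.2) (by omega),
            cnt_pre_small b w (fun X hX => hX.2.1) (by omega), if_pos heq]
          simp
        · have hc := rec1 b w hwne n (by omega)
          have hc' : (cnt b (fun X => ¬ w <:+: X ∧ w.drop 1 <+: X) (n + 1) : ℚ)
              + (cnt b (fun X => ¬ w <:+: X ∧ w.drop 1 <+: X ∧ w.dropLast <:+ X) n : ℚ)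
              = (b : ℚ) * cnt b (fun X => ¬ w <:+: X ∧ w.drop 1 <+: X) n := by
            exact_mod_cast hc
          have : ¬ (n + 1 = w.length - 1) := by omega
          rw [if_neg this]
          linarith
  · -- second power series identity
    refine PowerSeries.ext fun n => ?_
    rw [sub_mul, one_mul, mul_assoc, map_sub, PowerSeries.coeff_C_mul, map_sub,
      PowerSeries.coeff_one]
    cases n with
    | zero =>
        rw [hXmul0, hXmul0, Zser, PowerSeries.coeff_mk, Nxy_A b w hwne,
          cnt_A_zero b w hwne]
        simp
    | succ n =>
        rw [PowerSeries.coeff_succ_X_mul, PowerSeries.coeff_succ_X_mul, Zser, Zser,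
          PowerSeries.coeff_mk, PowerSeries.coeff_mk, PowerSeries.coeff_mk,
          Nxy_A b w hwne, Nxy_A b w hwne, Nxy_PV b w hwne]
        have hc := rec2 b w hwne n
        have hc' : (cnt b (fun X => ¬ w <:+: X) (n + 1) : ℚ)
            + (cnt b (fun X => ¬ w <:+: X ∧ w.drop 1 <+: X) n : ℚ)
            = (b : ℚ) * cnt b (fun X => ¬ w <:+: X) n := by exact_mod_cast hc
        have : ¬ (n + 1 = 0) := by omega
        rw [if_neg this]
        linarith
  · -- first tsum
    rw [tsum_congr (fun l => by rw [Nxy_PV b w hwne l])]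
    exact (hasSum_NV b hb w hwne).tsum_eq
  · -- second tsum
    rw [tsum_congr (fun l => by rw [Nxy_PVU b w hwne l])]
    rw [(hasSum_NVU b hb w hwne).tsum_eq]
    have hb0 : (b : ℝ) ≠ 0 := by positivity
    have h1 : ((2 : ℤ) - (w.length : ℤ)) = 1 - ((w.length - 1 : ℕ) : ℤ) := by
      rw [Nat.cast_sub hw]; push_cast; ring
    rw [h1, zpow_sub₀ hb0, zpow_one, zpow_natCast, div_eq_mul_inv, ← inv_pow]

/-- The two power series identities of Lemma c (the first multiplied through by `t^{p-1}`
to avoid negative exponents), together with the evaluations `M_w(v,0) = b` and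
`M_w(v,0,u) = b^{2-p}` obtained by substituting `t = 1/b`. -/
theorem stmt7 (b : ℕ) (hb : 1 < b) (w : List (Fin b)) (hw : 1 ≤ w.length) :
    (1 - PowerSeries.C (b : ℚ) * X) * Zser b w (w.drop 1) [] 0 =
        (X : PowerSeries ℚ) ^ (w.length - 1) -
          X * Zser b w (w.drop 1) (w.take (w.length - 1)) 0 ∧
    (1 - PowerSeries.C (b : ℚ) * X) * Zser b w [] [] 0 =
        1 - X * Zser b w (w.drop 1) [] 0 ∧
    ∑' l : ℕ, (Nxy b w (w.drop 1) [] 0 l : ℝ) * ((b : ℝ)⁻¹) ^ l = (b : ℝ) ∧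
    ∑' l : ℕ, (Nxy b w (w.drop 1) (w.take (w.length - 1)) 0 l : ℝ) * ((b : ℝ)⁻¹) ^ l =
      (b : ℝ) ^ ((2 : ℤ) - (w.length : ℤ)) := by
  exact stmt7' b hb w hw
end

section
/- The generating series of w-avoiding strings ending in u equals the generating series of w-avoiding strings beginning with v: Z_w(ε,0,u)(t) = Z_w(v,0)(t), where u is the (p-1)-prefix and v the (p-1)-suffix of w. -/
open scoped BigOperators
open PowerSeries

section Aux

variable {b : ℕ}

/-- `occCount` via `countP`. -/
lemma occCount_eq_countP (w X : List (Fin b)) :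
    occCount w X = (List.range X.length).countP fun i =>
      decide ((X.drop i).take w.length = w) := by
  rw [occCount, List.countP_eq_length_filter]

/-- The positions past `X.length + 1 - w.length` never carry occurrences. -/
lemma occ_restrict {w : List (Fin b)} (hw : 1 ≤ w.length) (X : List (Fin b)) :
    occCount w X = (List.range (X.length + 1 - w.length)).countP fun i =>
      decide ((X.drop i).take w.length = w) := by
  rw [occCount_eq_countP]
  rcases le_or_gt w.length X.length with h | h
  · have hXl : X.length = (X.length + 1 - w.length) + (w.length - 1) := by omega
    conv_lhs => rw [hXl]
    rw [List.range_add, List.countP_append]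
    have : ((List.range (w.length - 1)).map ((X.length + 1 - w.length) + ·)).countP
        (fun i => decide ((X.drop i).take w.length = w)) = 0 := by
      rw [List.countP_map, List.countP_eq_zero]
      intro i hi
      rw [List.mem_range] at hi
      simp only [Function.comp_apply, decide_eq_true_eq]
      intro hc
      have := congrArg List.length hc
      simp only [List.length_take, List.length_drop] at this
      omega
    omega
  · rw [show X.length + 1 - w.length = 0 by omega]
    simp only [List.range_zero, List.countP_nil]
    rw [List.countP_eq_zero]
    intro i hi
    rw [List.mem_range] at hi
    simp only [decide_eq_true_eq]
    intro hc
    have := congrArg List.length hc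
    simp only [List.length_take, List.length_drop] at this
    omega

/-- Appending a letter: occurrences grow by one iff `w` becomes a suffix. -/
lemma occ_concat {w : List (Fin b)} (hw : 1 ≤ w.length) (X : List (Fin b)) (c : Fin b) :
    occCount w (X ++ [c]) = occCount w X + (if w <:+ X ++ [c] then 1 else 0) := by
  rcases le_or_gt w.length (X.length + 1) with h | h
  · have hr : (X ++ [c]).length + 1 - w.length = (X.length + 1 - w.length) + 1 := by
      simp only [List.length_append, List.length_cons, List.length_nil]
      omega
    rw [occ_restrict hw, hr, List.range_succ, List.countP_append, occ_restrict hw X]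
    congr 1
    · apply List.countP_congr
      intro i hi
      rw [List.mem_range] at hi
      have hip : i + w.length ≤ X.length := by omega
      simp only [decide_eq_true_eq]
      rw [List.drop_append_of_le_length (by omega),
        List.take_append_of_le_length (by rw [List.length_drop]; omega)]
    · simp only [List.countP_cons, List.countP_nil, Nat.zero_add]
      have hlen : ((X ++ [c]).drop (X.length + 1 - w.length)).length = w.length := by
        rw [List.length_drop]
        simp only [List.length_append, List.length_cons, List.length_nil]
        omega
      have harg : (X ++ [c]).length - w.length = X.length + 1 - w.length := by
        simp only [List.length_append, List.length_cons, List.length_nil]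
      have hiff : ((X ++ [c]).drop (X.length + 1 - w.length) = w) ↔ (w <:+ X ++ [c]) := by
        rw [List.suffix_iff_eq_drop, harg]
        exact eq_comm
      rw [List.take_of_length_le (le_of_eq hlen)]
      exact if_congr (by simp only [decide_eq_true_eq]; exact hiff) rfl rfl
  · have hns : ¬ w <:+ X ++ [c] := by
      intro hs
      have := hs.length_le
      simp only [List.length_append, List.length_cons, List.length_nil] at this
      omega
    rw [if_neg hns, occ_restrict hw, occ_restrict hw X,
      show (X ++ [c]).length + 1 - w.length = 0 by
        simp only [List.length_append, List.length_cons, List.length_nil]; omega,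
      show X.length + 1 - w.length = 0 by omega]
    simp

/-- Prepending a letter: occurrences grow by one iff `w` becomes a prefix. -/
lemma occ_cons {w : List (Fin b)} (hw : 1 ≤ w.length) (X : List (Fin b)) (c : Fin b) :
    occCount w (c :: X) = occCount w X + (if w <+: c :: X then 1 else 0) := by
  rw [occCount_eq_countP, occCount_eq_countP]
  simp only [List.length_cons]
  rw [List.range_succ_eq_map, List.countP_cons, List.countP_map]
  congr 1
  · have hiff : ((c :: X).take w.length = w) ↔ (w <+: c :: X) := by
      rw [List.prefix_iff_eq_take]
      constructor
      · intro h'; exact h'.symm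
      · intro h'; exact h'.symm
    exact if_congr (by simp only [List.drop_zero, decide_eq_true_eq]; exact hiff) rfl rfl

lemma ofFn_eq_init {α : Type*} {l : ℕ} (g : Fin (l + 1) → α) :
    List.ofFn g = List.ofFn (Fin.init g) ++ [g (Fin.last l)] := by
  rw [List.ofFn_succ', List.concat_eq_append]
  rfl

lemma ofFn_eq_tail {α : Type*} {l : ℕ} (g : Fin (l + 1) → α) :
    List.ofFn g = g 0 :: List.ofFn (Fin.tail g) := by
  rw [List.ofFn_succ]
  rfl

/-- Generic partition of a subtype count. -/
lemma card_eq_add_of_iff {α : Type*} [Fintype α] (P Q R : α → Prop)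
    [DecidablePred P] [DecidablePred Q] [DecidablePred R]
    (h : ∀ a, P a ↔ Q a ∨ R a) (hd : ∀ a, Q a → R a → False) :
    Fintype.card {a // P a} = Fintype.card {a // Q a} + Fintype.card {a // R a} := by
  classical
  rw [Fintype.card_subtype, Fintype.card_subtype, Fintype.card_subtype,
    ← Finset.card_union_of_disjoint (by
      simp only [Finset.disjoint_left, Finset.mem_filter, Finset.mem_univ, true_and]
      exact fun a hq hr => hd a hq hr)]
  congr 1
  ext a
  simp [h a, Finset.mem_filter]

/-- Equivalence splitting off the last letter. -/
def snocEquivAux (b : ℕ) (P : List (Fin b) → Prop) (l : ℕ) :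
    {g : Fin (l + 1) → Fin b // P (List.ofFn (Fin.init g))} ≃
      {f : Fin l → Fin b // P (List.ofFn f)} × Fin b where
  toFun g := (⟨Fin.init g.1, g.2⟩, g.1 (Fin.last l))
  invFun x := ⟨Fin.snoc x.1.1 x.2, by rw [Fin.init_snoc]; exact x.1.2⟩
  left_inv g := by
    apply Subtype.ext
    exact Fin.snoc_init_self g.1
  right_inv x := by
    obtain ⟨⟨f, hf⟩, c⟩ := x
    simp only [Prod.mk.injEq, Subtype.mk.injEq]
    exact ⟨Fin.init_snoc _ _, Fin.snoc_last _ _⟩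

/-- Counting functions with a condition on the initial segment. -/
lemma card_snoc (P : List (Fin b) → Prop) [DecidablePred P] (l : ℕ) :
    Fintype.card {g : Fin (l + 1) → Fin b // P (List.ofFn (Fin.init g))} =
      Fintype.card {f : Fin l → Fin b // P (List.ofFn f)} * b := by
  rw [Fintype.card_congr (snocEquivAux b P l), Fintype.card_prod, Fintype.card_fin]

/-- Equivalence splitting off the first letter. -/
def consEquivAux (b : ℕ) (P : List (Fin b) → Prop) (l : ℕ) :
    {g : Fin (l + 1) → Fin b // P (List.ofFn (Fin.tail g))} ≃
      {f : Fin l → Fin b // P (List.ofFn f)} × Fin b where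
  toFun g := (⟨Fin.tail g.1, g.2⟩, g.1 0)
  invFun x := ⟨Fin.cons x.2 x.1.1, by rw [Fin.tail_cons]; exact x.1.2⟩
  left_inv g := by
    apply Subtype.ext
    exact Fin.cons_self_tail g.1
  right_inv x := by
    obtain ⟨⟨f, hf⟩, c⟩ := x
    simp only [Prod.mk.injEq, Subtype.mk.injEq]
    exact ⟨Fin.tail_cons _ _, Fin.cons_zero _ _⟩

/-- Counting functions with a condition on the tail segment. -/
lemma card_cons (P : List (Fin b) → Prop) [DecidablePred P] (l : ℕ) :
    Fintype.card {g : Fin (l + 1) → Fin b // P (List.ofFn (Fin.tail g))} =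
      Fintype.card {f : Fin l → Fin b // P (List.ofFn f)} * b := by
  rw [Fintype.card_congr (consEquivAux b P l), Fintype.card_prod, Fintype.card_fin]

/-- The avoiding count. -/
def cA (b : ℕ) (w : List (Fin b)) (l : ℕ) : ℕ :=
  Fintype.card {f : Fin l → Fin b // occCount w (List.ofFn f) = 0}

/-- Count of strings with exactly one occurrence of `w`, sitting at the end. -/
def cE (b : ℕ) (w : List (Fin b)) (m : ℕ) : ℕ :=
  Fintype.card {g : Fin m → Fin b //
    occCount w (List.ofFn g) = 1 ∧ w <:+ List.ofFn g}

/-- Count of strings with exactly one occurrence of `w`, sitting at the start. -/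
def cS (b : ℕ) (w : List (Fin b)) (m : ℕ) : ℕ :=
  Fintype.card {g : Fin m → Fin b //
    occCount w (List.ofFn g) = 1 ∧ w <+: List.ofFn g}

lemma D_split {w : List (Fin b)} (hw : 1 ≤ w.length) (l : ℕ) :
    cA b w (l + 1) + cE b w (l + 1) = cA b w l * b := by
  have h2 :
      Fintype.card {g : Fin (l + 1) → Fin b // occCount w (List.ofFn (Fin.init g)) = 0} =
        Fintype.card {g : Fin (l + 1) → Fin b // occCount w (List.ofFn g) = 0} +
        Fintype.card {g : Fin (l + 1) → Fin b //
          occCount w (List.ofFn g) = 1 ∧ w <:+ List.ofFn g} := by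
    apply card_eq_add_of_iff
    · intro g
      have hk := occ_concat hw (List.ofFn (Fin.init g)) (g (Fin.last l))
      rw [← ofFn_eq_init] at hk
      by_cases hs : w <:+ List.ofFn g
      · rw [if_pos hs] at hk
        constructor
        · intro h0; right; exact ⟨by omega, hs⟩
        · rintro (h0 | ⟨h1, -⟩) <;> omega
      · rw [if_neg hs] at hk
        constructor
        · intro h0; left; omega
        · rintro (h0 | ⟨-, hs'⟩)
          · omega
          · exact absurd hs' hs
    · rintro g h0 ⟨h1, -⟩; omega
  calc cA b w (l + 1) + cE b w (l + 1)
      = Fintype.card {g : Fin (l + 1) → Fin b // occCount w (List.ofFn (Fin.init g)) = 0} :=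
        h2.symm
    _ = cA b w l * b := card_snoc (fun X => occCount w X = 0) l

lemma T_split {w : List (Fin b)} (hw : 1 ≤ w.length) (l : ℕ) :
    cA b w (l + 1) + cS b w (l + 1) = cA b w l * b := by
  have h2 :
      Fintype.card {g : Fin (l + 1) → Fin b // occCount w (List.ofFn (Fin.tail g)) = 0} =
        Fintype.card {g : Fin (l + 1) → Fin b // occCount w (List.ofFn g) = 0} +
        Fintype.card {g : Fin (l + 1) → Fin b //
          occCount w (List.ofFn g) = 1 ∧ w <+: List.ofFn g} := by
    apply card_eq_add_of_iff
    · intro g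
      have hk := occ_cons hw (List.ofFn (Fin.tail g)) (g 0)
      rw [← ofFn_eq_tail] at hk
      by_cases hs : w <+: List.ofFn g
      · rw [if_pos hs] at hk
        constructor
        · intro h0; right; exact ⟨by omega, hs⟩
        · rintro (h0 | ⟨h1, -⟩) <;> omega
      · rw [if_neg hs] at hk
        constructor
        · intro h0; left; omega
        · rintro (h0 | ⟨-, hs'⟩)
          · omega
          · exact absurd hs' hs
    · rintro g h0 ⟨h1, -⟩; omega
  calc cA b w (l + 1) + cS b w (l + 1)
      = Fintype.card {g : Fin (l + 1) → Fin b // occCount w (List.ofFn (Fin.tail g)) = 0} :=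
        h2.symm
    _ = cA b w l * b := card_cons (fun X => occCount w X = 0) l

lemma Nxy_left {w : List (Fin b)} (hw : 1 ≤ w.length) (l : ℕ) :
    Nxy b w [] (w.take (w.length - 1)) 0 l = cE b w (l + 1) := by
  have hwne : w ≠ [] := by intro h; rw [h] at hw; simp at hw
  have hw' : w.dropLast ++ [w.getLast hwne] = w := List.dropLast_append_getLast hwne
  rw [Nxy, cE]
  apply Fintype.card_congr
  refine
    { toFun := fun f => ⟨Fin.snoc f.1 (w.getLast hwne), ?_⟩,
      invFun := fun g => ⟨Fin.init g.1, ?_⟩,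
      left_inv := ?_, right_inv := ?_ }
  · -- forward property
    obtain ⟨h0, -, hsuf⟩ := f.2
    have hsuf' : w.dropLast <:+ List.ofFn f.1 := by
      rw [List.dropLast_eq_take]; exact hsuf
    have hof : List.ofFn (Fin.snoc f.1 (w.getLast hwne)) =
        List.ofFn f.1 ++ [w.getLast hwne] := by
      rw [ofFn_eq_init, Fin.init_snoc, Fin.snoc_last]
    have hsw : w <:+ List.ofFn f.1 ++ [w.getLast hwne] := by
      obtain ⟨Z, hZ⟩ := hsuf'
      exact ⟨Z, by rw [← hZ, List.append_assoc, hw']⟩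
    constructor
    · rw [hof, occ_concat hw _ _, h0, if_pos hsw]
    · rw [hof]; exact hsw
  · -- backward property
    obtain ⟨h1, hsw⟩ := g.2
    have hk := occ_concat hw (List.ofFn (Fin.init g.1)) (g.1 (Fin.last l))
    rw [← ofFn_eq_init, if_pos hsw] at hk
    refine ⟨by omega, List.nil_prefix, ?_⟩
    obtain ⟨Z, hZ⟩ := hsw
    have hZ' : (Z ++ w.dropLast) ++ [w.getLast hwne] = List.ofFn (Fin.init g.1) ++ [g.1 (Fin.last l)] := by
      rw [List.append_assoc, hw', ← ofFn_eq_init]; exact hZ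
    have hzd := congrArg List.dropLast hZ'
    rw [List.dropLast_concat, List.dropLast_concat] at hzd
    have ht : w.take (w.length - 1) = w.dropLast := (List.dropLast_eq_take (l := w)).symm
    rw [ht]
    exact ⟨Z, hzd⟩
  · intro f
    have hh : @Fin.init l (fun _ => Fin b) (@Fin.snoc l (fun _ => Fin b) f.1 (w.getLast hwne)) = f.1 :=
      Fin.init_snoc _ _
    exact Subtype.ext hh
  · intro g
    obtain ⟨h1, hsw⟩ := g.2
    have hlast : g.1 (Fin.last l) = w.getLast hwne := by
      obtain ⟨Z, hZ⟩ := hsw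
      have hZ' : (Z ++ w.dropLast) ++ [w.getLast hwne] = List.ofFn (Fin.init g.1) ++ [g.1 (Fin.last l)] := by
        rw [List.append_assoc, hw', ← ofFn_eq_init]; exact hZ
      have := congrArg List.getLast? hZ'
      rw [List.getLast?_concat, List.getLast?_concat] at this
      exact (Option.some.inj this).symm
    have hh := Fin.snoc_init_self (g.1 : Fin (l + 1) → Fin b)
    rw [hlast] at hh
    exact Subtype.ext hh

lemma Nxy_right {w : List (Fin b)} (hw : 1 ≤ w.length) (l : ℕ) :
    Nxy b w (w.drop 1) [] 0 l = cS b w (l + 1) := by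
  have hwne : w ≠ [] := by intro h; rw [h] at hw; simp at hw
  have hw' : w.head hwne :: w.tail = w := List.cons_head_tail hwne
  rw [Nxy, cS]
  apply Fintype.card_congr
  refine
    { toFun := fun f => ⟨Fin.cons (w.head hwne) f.1, ?_⟩,
      invFun := fun g => ⟨Fin.tail g.1, ?_⟩,
      left_inv := ?_, right_inv := ?_ }
  · obtain ⟨h0, hpre, -⟩ := f.2
    have hpre' : w.tail <+: List.ofFn f.1 := by
      rw [← List.drop_one]; exact hpre
    have hof : List.ofFn (Fin.cons (w.head hwne) f.1) =
        w.head hwne :: List.ofFn f.1 := by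
      rw [ofFn_eq_tail, Fin.cons_zero, Fin.tail_cons]
    have hpw : w <+: w.head hwne :: List.ofFn f.1 := by
      obtain ⟨Z, hZ⟩ := hpre'
      exact ⟨Z, by rw [← hZ, ← List.cons_append, hw']⟩
    constructor
    · rw [hof, occ_cons hw _ _, h0, if_pos hpw]
    · rw [hof]; exact hpw
  · obtain ⟨h1, hpw⟩ := g.2
    have hk := occ_cons hw (List.ofFn (Fin.tail g.1)) (g.1 0)
    rw [← ofFn_eq_tail, if_pos hpw] at hk
    refine ⟨by omega, ?_, List.nil_suffix⟩
    obtain ⟨Z, hZ⟩ := hpw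
    have hZ' : w.head hwne :: (w.tail ++ Z) = g.1 0 :: List.ofFn (Fin.tail g.1) := by
      rw [← List.cons_append, hw', ← ofFn_eq_tail]; exact hZ
    have := (List.cons.injEq _ _ _ _).mp hZ'
    rw [List.drop_one]
    exact ⟨Z, this.2⟩
  · intro f
    have hh : @Fin.tail l (fun _ => Fin b) (@Fin.cons l (fun _ => Fin b) (w.head hwne) f.1) = f.1 :=
      Fin.tail_cons _ _
    exact Subtype.ext hh
  · intro g
    obtain ⟨h1, hpw⟩ := g.2
    have hhead : g.1 0 = w.head hwne := by
      obtain ⟨Z, hZ⟩ := hpw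
      have hZ' : w.head hwne :: (w.tail ++ Z) = g.1 0 :: List.ofFn (Fin.tail g.1) := by
        rw [← List.cons_append, hw', ← ofFn_eq_tail]; exact hZ
      exact ((List.cons.injEq _ _ _ _).mp hZ').1.symm
    have hh := Fin.cons_self_tail (g.1 : Fin (l + 1) → Fin b)
    rw [hhead] at hh
    exact Subtype.ext hh

end Aux

/-- `Z_w(ε,0,u) = Z_w(v,0)`: the generating series of `w`-avoiding strings ending in the
`(p-1)`-prefix `u` of `w` equals that of `w`-avoiding strings starting with the
`(p-1)`-suffix `v` of `w`. -/
theorem stmt8 (b : ℕ) (hb : 1 < b) (w : List (Fin b)) (hw : 1 ≤ w.length) :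
    Zser b w [] (w.take (w.length - 1)) 0 = Zser b w (w.drop 1) [] 0 := by
  have key : ∀ l, Nxy b w [] (w.take (w.length - 1)) 0 l = Nxy b w (w.drop 1) [] 0 l := by
    intro l
    have hE := D_split (b := b) hw l
    have hS := T_split (b := b) hw l
    have hES : cE b w (l + 1) = cS b w (l + 1) := by omega
    rw [Nxy_left hw l, Nxy_right hw l, hES]
  apply PowerSeries.ext
  intro n
  rw [Zser, Zser, PowerSeries.coeff_mk, PowerSeries.coeff_mk]
  exact_mod_cast key n
end
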